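/- arXiv:1512.02490 — 6 statements merged into one kernel-verified Lean document; each statement's English description precedes it below -/
import Mathlib

section
/- Let H be a finite-dimensional complex Hilbert space. Let f:(0,∞)→(0,∞) be continuous with lim_{ε→0⁺} f(ε) = ∞, and let g:[0,∞)→[0,∞) be continuous, monotone increasing, with g(0)=0 and lim_{t→∞} g(t) = ∞. Let A, B be positive semidefinite operators on H with supp A ⊆ supp B (equivalently, ker B ⊆ ker A). Then the limit lim_{ε→0⁺} tr g( f(B+εI) A f(B+εI) ) exists and equals tr g( f₀(B) A f₀(B) ), where f₀:[0,∞)→[0,∞) agrees with f on (0,∞) and f₀(0)=0. -/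
open Matrix
open scoped ComplexOrder

/-- Apply a real function to (the eigenvalues of) a Hermitian matrix via the
spectral decomposition (functional calculus); junk value `0` otherwise. -/
noncomputable def matFun {n : ℕ} (h : ℝ → ℝ) (A : Matrix (Fin n) (Fin n) ℂ) :
    Matrix (Fin n) (Fin n) ℂ :=
  if hA : A.IsHermitian then hA.cfc h else 0

/-- The (real part of the) trace of a complex matrix. -/
noncomputable def retr {n : ℕ} (M : Matrix (Fin n) (Fin n) ℂ) : ℝ := M.trace.re

/-- Real power of a positive semidefinite matrix via the spectral decomposition. -/
noncomputable def rpowMat {n : ℕ} (A : Matrix (Fin n) (Fin n) ℂ) (r : ℝ) :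
    Matrix (Fin n) (Fin n) ℂ := matFun (fun t => t ^ r) A

/-- Density operators: positive semidefinite matrices of trace `1`. -/
def Density (n : ℕ) := {A : Matrix (Fin n) (Fin n) ℂ // A.PosSemidef ∧ A.trace = 1}

/-- `supp A ⊆ supp B`, i.e. the range of `A` is contained in the range of `B`. -/
def suppLE {n : ℕ} (A B : Matrix (Fin n) (Fin n) ℂ) : Prop :=
  LinearMap.range (Matrix.toLin' A) ≤ LinearMap.range (Matrix.toLin' B)

/-- `supp A ⟂ supp B`: the ranges of `A` and `B` are orthogonal. -/
def suppOrth {n : ℕ} (A B : Matrix (Fin n) (Fin n) ℂ) : Prop :=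
  ∀ x y : Fin n → ℂ, star (A.mulVec x) ⬝ᵥ B.mulVec y = 0

/-- The extension `f₀` of `f : (0,∞) → (0,∞)` to `[0,∞)` with `f₀ 0 = 0`. -/
noncomputable def extZero (f : ℝ → ℝ) : ℝ → ℝ := fun t => if 0 < t then f t else 0

/-- The generalized divergence `D'_{f,g}(A‖B) = tr g(f₀(B) A f₀(B))` (real-valued version,
used when `lim_{ε→0⁺} f(ε) = 0`). -/
noncomputable def Dfg {n : ℕ} (f g : ℝ → ℝ) (A B : Matrix (Fin n) (Fin n) ℂ) : ℝ :=
  retr (matFun g (matFun (extZero f) B * A * matFun (extZero f) B))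

open scoped Classical in
/-- The generalized divergence `D'_{f,g}(A‖B)`: equal to `tr g(f₀(B) A f₀(B))` if
`supp A ⊆ supp B` and `∞` otherwise (used when `lim_{ε→0⁺} f(ε) = ∞`). -/
noncomputable def DfgE {n : ℕ} (f g : ℝ → ℝ) (A B : Matrix (Fin n) (Fin n) ℂ) : EReal :=
  if suppLE A B then ((Dfg f g A B : ℝ) : EReal) else ⊤

open scoped Classical in
/-- The quantum Rényi divergence `D_α(A‖B)` of density operators `A, B`
(with the convention `tr A = 1`), with values in the extended reals. -/
noncomputable def Dalpha {n : ℕ} (α : ℝ) (A B : Matrix (Fin n) (Fin n) ℂ) : EReal :=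
  if (α < 1 ∧ ¬ suppOrth A B) ∨ (1 < α ∧ suppLE A B) then
    (((α - 1)⁻¹ * Real.log (retr (rpowMat
      (rpowMat B ((1 - α) / (2 * α)) * A * rpowMat B ((1 - α) / (2 * α))) α)) : ℝ) : EReal)
  else ⊤

/-- The quantum Rényi divergence on the cone of positive definite matrices
(a finite real number there). -/
noncomputable def DalphaPD {n : ℕ} (α : ℝ) (A B : Matrix (Fin n) (Fin n) ℂ) : ℝ :=
  (α - 1)⁻¹ * Real.log ((retr A)⁻¹ * retr (rpowMat
    (rpowMat B ((1 - α) / (2 * α)) * A * rpowMat B ((1 - α) / (2 * α))) α))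

/-- Rank-one (orthogonal) projections: `P = x ⊗ x` for a unit vector `x`. -/
def IsRankOneProj {n : ℕ} (P : Matrix (Fin n) (Fin n) ℂ) : Prop :=
  ∃ x : Fin n → ℂ, star x ⬝ᵥ x = 1 ∧ P = Matrix.vecMulVec x (star x)

section Aux

variable {n : ℕ}

lemma contOn_spec {A : Matrix (Fin n) (Fin n) ℂ} (hA : A.IsHermitian) (h : ℝ → ℝ) :
    ContinuousOn h (spectrum ℝ A) := by
  have : (spectrum ℝ A).Finite := by
    rw [hA.spectrum_real_eq_range_eigenvalues]; exact Set.finite_range _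
  exact Set.Finite.continuousOn this h

lemma matFun_eq_cfc {A : Matrix (Fin n) (Fin n) ℂ} (hA : A.IsHermitian) (h : ℝ → ℝ) :
    matFun h A = cfc h A := by
  rw [matFun, dif_pos hA, ← hA.cfc_eq]

lemma trace_hcfc {M : Matrix (Fin n) (Fin n) ℂ} (hM : M.IsHermitian) (h : ℝ → ℝ) :
    (hM.cfc h).trace = ∑ i, (h (hM.eigenvalues i) : ℂ) := by
  rw [Matrix.IsHermitian.cfc, Unitary.conjStarAlgAut_apply, Matrix.trace_mul_cycle,
    Unitary.coe_star_mul_self, one_mul, Matrix.trace_diagonal]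
  rfl

lemma spec_nonneg {B : Matrix (Fin n) (Fin n) ℂ} (hB : B.PosSemidef) :
    spectrum ℝ B ⊆ Set.Ici 0 := by
  rw [hB.1.spectrum_real_eq_range_eigenvalues]
  rintro x ⟨i, rfl⟩
  exact hB.eigenvalues_nonneg i

lemma cfc_mul_right_eq_zero {A B : Matrix (Fin n) (Fin n) ℂ} (hB : B.PosSemidef)
    (hsupp : LinearMap.range (Matrix.toLin' A) ≤ LinearMap.range (Matrix.toLin' B))
    (d : ℝ → ℝ) (hd : ∀ t > (0:ℝ), d t = 0) :
    cfc d B * A = 0 := by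
  have hBB : cfc d B * B = 0 := by
    have h1 : cfc (fun t => d t * t) B = cfc d B * B := by
      have h := cfc_id' ℝ B hB.1
      have h0 := cfc_mul (R := ℝ) d (fun x => x) B (contOn_spec hB.1 _) (contOn_spec hB.1 _)
      rw [h] at h0
      exact h0
    rw [← h1]
    have h2 : cfc (fun t => d t * t) B = cfc (fun _ : ℝ => (0:ℝ)) B := by
      apply cfc_congr
      intro x hx
      rcases lt_or_eq_of_le (Set.mem_Ici.mp (spec_nonneg hB hx)) with hx' | hx'
      · simp [hd x hx']
      · simp [← hx']
    rw [h2, cfc_const_zero]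
  have key : ∀ v : Fin n → ℂ, (cfc d B * A) *ᵥ v = 0 := by
    intro v
    obtain ⟨w, hw⟩ := hsupp (LinearMap.mem_range_self (Matrix.toLin' A) v)
    simp only [Matrix.toLin'_apply] at hw
    rw [← Matrix.mulVec_mulVec, ← hw, Matrix.mulVec_mulVec, hBB, Matrix.zero_mulVec]
  ext i j
  have := congrFun (key (Pi.single j 1)) i
  simpa [Matrix.mulVec_single] using this

lemma herm_smul_one (ε : ℝ) : ((ε:ℂ) • (1 : Matrix (Fin n) (Fin n) ℂ)).IsHermitian := by
  unfold Matrix.IsHermitian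
  rw [Matrix.conjTranspose_smul, Matrix.conjTranspose_one]
  simp [Complex.star_def, Complex.conj_ofReal]

lemma cfc_selfAdj {B : Matrix (Fin n) (Fin n) ℂ} (hB : B.IsHermitian) (h : ℝ → ℝ) :
    (cfc h B).IsHermitian := by
  have : IsSelfAdjoint (cfc h B) := cfc_predicate h B
  exact this

lemma cfc_shift {B : Matrix (Fin n) (Fin n) ℂ} (hB : B.IsHermitian) (f : ℝ → ℝ) (ε : ℝ) :
    cfc f (B + (ε:ℂ) • 1) = cfc (fun t => f (t + ε)) B := by
  have hfin : (spectrum ℝ B).Finite := by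
    rw [hB.spectrum_real_eq_range_eigenvalues]; exact Set.finite_range _
  have hid := cfc_id' ℝ B hB
  have h1 := cfc_add_const (R := ℝ) ε (fun t : ℝ => t) B (hfin.continuousOn _) hB
  beta_reduce at h1
  rw [hid] at h1
  have h2 := cfc_comp' (R := ℝ) f (fun t : ℝ => t + ε) B
      (Set.Finite.continuousOn (hfin.image _) f) (hfin.continuousOn _) hB
  rw [h1] at h2
  have h3 : B + (algebraMap ℝ (Matrix (Fin n) (Fin n) ℂ)) ε = B + (ε:ℂ) • 1 := by
    congr 1
    rw [IsScalarTower.algebraMap_apply ℝ ℂ (Matrix (Fin n) (Fin n) ℂ),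
      Algebra.algebraMap_eq_smul_one]
    norm_num
  rw [h3] at h2
  beta_reduce at h2
  exact h2.symm


lemma key_identity {A B : Matrix (Fin n) (Fin n) ℂ} (hA : A.IsHermitian) (hB : B.PosSemidef)
    (hsupp : LinearMap.range (Matrix.toLin' A) ≤ LinearMap.range (Matrix.toLin' B))
    (f : ℝ → ℝ) (ε : ℝ) :
    cfc f (B + (ε:ℂ) • 1) * A * cfc f (B + (ε:ℂ) • 1)
      = cfc (extZero (fun t => f (t + ε))) B * A * cfc (extZero (fun t => f (t + ε))) B := by
  have hfin : (spectrum ℝ B).Finite := by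
    rw [hB.1.spectrum_real_eq_range_eigenvalues]; exact Set.finite_range _
  set ψ : ℝ → ℝ := extZero (fun t => f (t + ε)) with hψ
  set d : ℝ → ℝ := fun t => if 0 < t then 0 else f (t + ε) with hd
  have hsum : (fun t : ℝ => f (t + ε)) = fun t => ψ t + d t := by
    funext t; by_cases h : 0 < t <;> simp [hψ, hd, extZero, h]
  have hadd : cfc (fun t : ℝ => f (t + ε)) B = cfc ψ B + cfc d B := by
    rw [hsum]; exact cfc_add B ψ d (hfin.continuousOn _) (hfin.continuousOn _)
  have hDA : cfc d B * A = 0 := cfc_mul_right_eq_zero hB hsupp d (fun t ht => if_pos ht)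
  have hAD : A * cfc d B = 0 := by
    have h1 := congrArg star hDA
    rw [StarMul.star_mul, star_zero, show star A = A from hA,
      show star (cfc d B) = cfc d B from cfc_selfAdj hB.1 d] at h1
    exact h1
  rw [cfc_shift hB.1 f ε, hadd, add_mul, hDA, add_zero, mul_add,
    mul_assoc (cfc ψ B) A (cfc d B), hAD, mul_zero, add_zero]

lemma tendsto_cfc_ext {B : Matrix (Fin n) (Fin n) ℂ} (hB : B.PosSemidef)
    (f : ℝ → ℝ) (hf_cont : ContinuousOn f (Set.Ioi 0)) :
    Filter.Tendsto (fun ε : ℝ => cfc (extZero (fun t => f (t + ε))) B)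
      (nhdsWithin 0 (Set.Ioi 0)) (nhds (cfc (extZero f) B)) := by
  have hrep : ∀ h : ℝ → ℝ, cfc h B = (hB.1.eigenvectorUnitary : Matrix (Fin n) (Fin n) ℂ) *
      Matrix.diagonal (fun i => ((h (hB.1.eigenvalues i) : ℝ) : ℂ)) *
      star (hB.1.eigenvectorUnitary : Matrix (Fin n) (Fin n) ℂ) := by
    intro h
    rw [hB.1.cfc_eq]
    rfl
  have hcont : Continuous (fun v : Fin n → ℝ =>
      (hB.1.eigenvectorUnitary : Matrix (Fin n) (Fin n) ℂ) *
      Matrix.diagonal (fun i => ((v i : ℝ) : ℂ)) *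
      star (hB.1.eigenvectorUnitary : Matrix (Fin n) (Fin n) ℂ)) := by
    refine Continuous.matrix_mul (Continuous.matrix_mul continuous_const ?_) continuous_const
    exact Continuous.matrix_diagonal <|
      continuous_pi fun i => Complex.continuous_ofReal.comp (continuous_apply i)
  have hvals : Filter.Tendsto
      (fun ε : ℝ => fun i => extZero (fun t => f (t + ε)) (hB.1.eigenvalues i))
      (nhdsWithin 0 (Set.Ioi 0)) (nhds (fun i => extZero f (hB.1.eigenvalues i))) := by
    rw [tendsto_pi_nhds]
    intro i
    rcases (hB.eigenvalues_nonneg i).lt_or_eq with hpos | hzero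
    · have e1 : ∀ ε : ℝ, extZero (fun t => f (t + ε)) (hB.1.eigenvalues i)
          = f (hB.1.eigenvalues i + ε) := fun ε => if_pos hpos
      have e2 : extZero f (hB.1.eigenvalues i) = f (hB.1.eigenvalues i) := if_pos hpos
      simp only [e1, e2]
      have t1 : Filter.Tendsto (fun ε : ℝ => hB.1.eigenvalues i + ε)
          (nhdsWithin 0 (Set.Ioi 0)) (nhdsWithin (hB.1.eigenvalues i) (Set.Ioi 0)) := by
        rw [tendsto_nhdsWithin_iff]
        constructor
        · have : Filter.Tendsto (fun ε : ℝ => hB.1.eigenvalues i + ε) (nhds 0)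
              (nhds (hB.1.eigenvalues i + 0)) :=
            (continuous_const.add continuous_id).tendsto 0
          rw [add_zero] at this
          exact this.mono_left nhdsWithin_le_nhds
        · filter_upwards [self_mem_nhdsWithin] with ε hε
          exact add_pos hpos hε
      exact (hf_cont _ hpos).tendsto.comp t1
    · have e1 : ∀ ε : ℝ, extZero (fun t => f (t + ε)) (hB.1.eigenvalues i) = 0 := by
        intro ε; rw [extZero, ← hzero]; simp
      have e2 : extZero f (hB.1.eigenvalues i) = 0 := by rw [extZero, ← hzero]; simp
      simp only [e1, e2]
      exact tendsto_const_nhds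
  simp only [hrep]
  exact (hcont.tendsto _).comp hvals

lemma retr_cfc_sum {M : Matrix (Fin n) (Fin n) ℂ} (hM : M.IsHermitian) (h : ℝ → ℝ) :
    (cfc h M).trace.re = ∑ i, h (hM.eigenvalues i) := by
  rw [hM.cfc_eq, trace_hcfc hM h, ← Complex.ofReal_sum, Complex.ofReal_re]

lemma trace_re_eq_sum {M : Matrix (Fin n) (Fin n) ℂ} (hM : M.IsHermitian) :
    M.trace.re = ∑ i, hM.eigenvalues i := by
  have h1 := retr_cfc_sum hM id
  have h2 := cfc_id ℝ M hM
  rw [h2] at h1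
  exact h1

lemma eig_le_trace {M : Matrix (Fin n) (Fin n) ℂ} (hM : M.PosSemidef) (i : Fin n) :
    hM.1.eigenvalues i ≤ M.trace.re := by
  rw [trace_re_eq_sum hM.1]
  exact Finset.single_le_sum (fun j _ => hM.eigenvalues_nonneg j) (Finset.mem_univ i)

lemma tendsto_retr_cfc {α : Type*} {l : Filter α} {M : α → Matrix (Fin n) (Fin n) ℂ}
    {M₀ : Matrix (Fin n) (Fin n) ℂ} (hM : ∀ a, (M a).PosSemidef) (hM₀ : M₀.PosSemidef)
    (hlim : Filter.Tendsto M l (nhds M₀))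
    (g : ℝ → ℝ) (hg_cont : ContinuousOn g (Set.Ici 0)) :
    Filter.Tendsto (fun a => (cfc g (M a)).trace.re) l (nhds ((cfc g M₀).trace.re)) := by
  rw [Metric.tendsto_nhds]
  intro δ hδ
  set R : ℝ := M₀.trace.re + 1 with hR
  set δ' : ℝ := δ / (3 * (n + 1)) with hδ'
  have hδ'pos : 0 < δ' := by positivity
  obtain ⟨p, hp⟩ := exists_polynomial_near_of_continuousOn 0 R g
    (hg_cont.mono (Set.Icc_subset_Ici_self)) δ' hδ'pos
  -- the polynomial trace functional
  set T : Matrix (Fin n) (Fin n) ℂ → ℝ := fun N => (Polynomial.aeval N p).trace.re with hT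
  have hTcont : Continuous T :=
    Complex.continuous_re.comp ((p.continuous_aeval).matrix_trace)
  -- bound between the two functionals on PSD matrices with spectrum in [0, R]
  have hbound : ∀ N : Matrix (Fin n) (Fin n) ℂ, (hN : N.PosSemidef) →
      N.trace.re ≤ R → |(cfc g N).trace.re - T N| ≤ n * δ' := by
    intro N hN htr
    have hTN : T N = ∑ i, p.eval (hN.1.eigenvalues i) := by
      have hc := cfc_polynomial (R := ℝ) p N hN.1
      rw [hT]
      beta_reduce
      rw [← hc]
      exact retr_cfc_sum hN.1 _
    rw [hTN, retr_cfc_sum hN.1, ← Finset.sum_sub_distrib]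
    refine le_trans (Finset.abs_sum_le_sum_abs _ _) ?_
    have : ∀ i : Fin n, |g (hN.1.eigenvalues i) - p.eval (hN.1.eigenvalues i)| ≤ δ' := by
      intro i
      have hmem : hN.1.eigenvalues i ∈ Set.Icc 0 R :=
        ⟨hN.eigenvalues_nonneg i, le_trans (eig_le_trace hN i) htr⟩
      have := hp _ hmem
      rw [abs_sub_comm]
      exact le_of_lt this
    calc ∑ i, |g (hN.1.eigenvalues i) - p.eval (hN.1.eigenvalues i)|
        ≤ ∑ _i : Fin n, δ' := Finset.sum_le_sum (fun i _ => this i)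
      _ = n * δ' := by simp [mul_comm]
  -- eventually the trace is < R
  have htr_lim : Filter.Tendsto (fun a => (M a).trace.re) l (nhds M₀.trace.re) :=
    (Complex.continuous_re.comp (continuous_id.matrix_trace)).tendsto M₀ |>.comp hlim
  have hev1 : ∀ᶠ a in l, (M a).trace.re ≤ R := by
    have hlt : ∀ᶠ a in l, (M a).trace.re < R :=
      htr_lim.eventually_lt_const (by rw [hR]; linarith)
    filter_upwards [hlt] with a ha
    exact le_of_lt ha
  have hev2 : ∀ᶠ a in l, |T (M a) - T M₀| < δ' := by
    have := (hTcont.tendsto M₀).comp hlim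
    rw [Metric.tendsto_nhds] at this
    filter_upwards [this δ' hδ'pos] with a ha
    rwa [Real.dist_eq] at ha
  filter_upwards [hev1, hev2] with a h1 h2
  rw [Real.dist_eq]
  have b1 := hbound (M a) (hM a) h1
  have b2 := hbound M₀ hM₀ (by rw [hR]; linarith)
  have key : |(cfc g (M a)).trace.re - (cfc g M₀).trace.re|
      ≤ |(cfc g (M a)).trace.re - T (M a)| + |T (M a) - T M₀| + |T M₀ - (cfc g M₀).trace.re| := by
    have t1 := abs_sub_le ((cfc g (M a)).trace.re) (T (M a)) ((cfc g M₀).trace.re)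
    have t2 := abs_sub_le (T (M a)) (T M₀) ((cfc g M₀).trace.re)
    linarith
  have habs : |T M₀ - (cfc g M₀).trace.re| ≤ n * δ' := by rwa [abs_sub_comm]
  have hδeq : 3 * ((n:ℝ)+1) * δ' = δ := by
    rw [hδ']; field_simp
  have hnd' : (0:ℝ) ≤ (n:ℝ) * δ' := by positivity
  linarith [key, b1, h2, habs]

end Aux

/-- If `lim_{ε→0⁺} f(ε) = ∞`, `g` is monotone increasing with `g(0)=0`
and `g(t) → ∞`, and `supp A ⊆ supp B`, then
`tr g(f(B+εI) A f(B+εI)) → tr g(f₀(B) A f₀(B))` as `ε → 0⁺`. -/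
theorem stmt6 {n : ℕ}
    (f : ℝ → ℝ) (hf_pos : ∀ x ∈ Set.Ioi (0:ℝ), 0 < f x)
    (hf_cont : ContinuousOn f (Set.Ioi 0))
    (hf_lim : Filter.Tendsto f (nhdsWithin 0 (Set.Ioi 0)) Filter.atTop)
    (g : ℝ → ℝ) (hg_nonneg : ∀ x ∈ Set.Ici (0:ℝ), 0 ≤ g x)
    (hg_cont : ContinuousOn g (Set.Ici 0))
    (hg_mono : MonotoneOn g (Set.Ici 0)) (hg0 : g 0 = 0)
    (hg_top : Filter.Tendsto g Filter.atTop Filter.atTop)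
    (A B : Matrix (Fin n) (Fin n) ℂ) (hA : A.PosSemidef) (hB : B.PosSemidef)
    (hsupp : suppLE A B) :
    Filter.Tendsto
      (fun ε : ℝ => retr (matFun g
        (matFun f (B + (ε : ℂ) • 1) * A * matFun f (B + (ε : ℂ) • 1))))
      (nhdsWithin 0 (Set.Ioi 0))
      (nhds (retr (matFun g (matFun (extZero f) B * A * matFun (extZero f) B)))) := by
  have hsupp' : LinearMap.range (Matrix.toLin' A) ≤ LinearMap.range (Matrix.toLin' B) := hsupp
  -- the limit matrices
  set X₀ : Matrix (Fin n) (Fin n) ℂ := cfc (extZero f) B with hX₀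
  have hX₀herm : X₀.IsHermitian := cfc_selfAdj hB.1 _
  have hM₀psd : (X₀ * A * X₀).PosSemidef := by
    have := hA.mul_mul_conjTranspose_same X₀
    rwa [hX₀herm.eq] at this
  -- rewrite the function using cfc
  have hXherm : ∀ ε : ℝ, (cfc (extZero (fun t => f (t + ε))) B).IsHermitian :=
    fun ε => cfc_selfAdj hB.1 _
  have hMpsd : ∀ ε : ℝ, (cfc (extZero (fun t => f (t + ε))) B * A *
      cfc (extZero (fun t => f (t + ε))) B).PosSemidef := by
    intro ε
    have := hA.mul_mul_conjTranspose_same (cfc (extZero (fun t => f (t + ε))) B)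
    rwa [(hXherm ε).eq] at this
  have hfun : ∀ ε : ℝ, retr (matFun g
        (matFun f (B + (ε : ℂ) • 1) * A * matFun f (B + (ε : ℂ) • 1)))
      = (cfc g (cfc (extZero (fun t => f (t + ε))) B * A *
          cfc (extZero (fun t => f (t + ε))) B)).trace.re := by
    intro ε
    have hHerm : (B + (ε:ℂ) • 1).IsHermitian := hB.1.add (herm_smul_one ε)
    have h1 : matFun f (B + (ε : ℂ) • 1) = cfc f (B + (ε:ℂ) • 1) := matFun_eq_cfc hHerm f
    rw [retr, h1, key_identity hA.1 hB hsupp' f ε,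
      matFun_eq_cfc (hMpsd ε).1 g]
  have hfun0 : retr (matFun g (matFun (extZero f) B * A * matFun (extZero f) B))
      = (cfc g (X₀ * A * X₀)).trace.re := by
    rw [retr, matFun_eq_cfc hB.1 (extZero f), ← hX₀, matFun_eq_cfc hM₀psd.1 g]
  simp only [hfun, hfun0]
  -- convergence of matrices
  have hXlim : Filter.Tendsto (fun ε : ℝ => cfc (extZero (fun t => f (t + ε))) B)
      (nhdsWithin 0 (Set.Ioi 0)) (nhds X₀) := tendsto_cfc_ext hB f hf_cont
  have hΦ : Continuous (fun X : Matrix (Fin n) (Fin n) ℂ => X * A * X) :=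
    (continuous_id.matrix_mul continuous_const).matrix_mul continuous_id
  have hMlim : Filter.Tendsto
      (fun ε : ℝ => cfc (extZero (fun t => f (t + ε))) B * A *
        cfc (extZero (fun t => f (t + ε))) B)
      (nhdsWithin 0 (Set.Ioi 0)) (nhds (X₀ * A * X₀)) := (hΦ.tendsto X₀).comp hXlim
  exact tendsto_retr_cfc (fun ε => hMpsd ε) hM₀psd hMlim g hg_cont
end

section
/- Let H be a finite-dimensional complex Hilbert space. Let f:(0,∞)→(0,∞) be continuous with lim_{ε→0⁺} f(ε) = ∞, and let g:[0,∞)→[0,∞) be continuous, monotone increasing, with g(0)=0 and lim_{t→∞} g(t) = ∞. Let A, B be positive semidefinite operators on H such that supp A is not contained in supp B. Then tr g( f(B+εI) A f(B+εI) ) tends to ∞ as ε → 0⁺. -/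
open Matrix
open scoped ComplexOrder

section Helpers

lemma rcoe (r : ℝ) : (RCLike.ofReal r : ℂ) = Complex.ofReal r := by norm_cast

-- cfc of a Hermitian matrix is Hermitian
lemma cfc_isHermitian {n : ℕ} {M : Matrix (Fin n) (Fin n) ℂ} (hM : M.IsHermitian)
    (f : ℝ → ℝ) : (hM.cfc f).IsHermitian := by
  rw [← hM.cfc_eq]
  have h : IsSelfAdjoint (cfc f M) := cfc_predicate f M
  rw [Matrix.IsHermitian, ← star_eq_conjTranspose]
  exact h

-- eigenvector of cfc
lemma cfc_mulVec_eigen {n : ℕ} {M : Matrix (Fin n) (Fin n) ℂ} (hM : M.IsHermitian)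
    (f : ℝ → ℝ) {x : Fin n → ℂ} {c : ℝ} (hx : M *ᵥ x = (c : ℂ) • x) :
    (hM.cfc f) *ᵥ x = ((f c : ℝ) : ℂ) • x := by
  set U : Matrix (Fin n) (Fin n) ℂ := (hM.eigenvectorUnitary : Matrix (Fin n) (Fin n) ℂ) with hU
  have hUU : (star U) * U = 1 := by
    simpa [hU] using unitary.star_mul_self_of_mem hM.eigenvectorUnitary.2
  have hUU' : U * (star U) = 1 := by
    simpa [hU] using unitary.mul_star_self_of_mem hM.eigenvectorUnitary.2
  set y : Fin n → ℂ := (star U) *ᵥ x with hy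
  have hspec : M = U * diagonal ((↑) ∘ hM.eigenvalues) * star U := hM.spectral_theorem
  have h1 : diagonal ((↑) ∘ hM.eigenvalues : Fin n → ℂ) *ᵥ y = (c : ℂ) • y := by
    have h0 := congrArg (fun v => (star U) *ᵥ v) hx
    simp only [hspec, ← mulVec_mulVec, mulVec_smul] at h0
    rw [← hy] at h0
    calc diagonal ((↑) ∘ hM.eigenvalues : Fin n → ℂ) *ᵥ y
        = (star U * U) *ᵥ (diagonal ((↑) ∘ hM.eigenvalues : Fin n → ℂ) *ᵥ y) := by
          rw [hUU, one_mulVec]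
      _ = (c : ℂ) • y := by rw [← mulVec_mulVec]; exact h0
  have h2 : diagonal (((↑) : ℝ → ℂ) ∘ f ∘ hM.eigenvalues) *ᵥ y = ((f c : ℝ) : ℂ) • y := by
    funext i
    have h1i := congrFun h1 i
    simp only [mulVec_diagonal, Function.comp_apply, Pi.smul_apply, smul_eq_mul] at h1i ⊢
    rcases eq_or_ne (y i) 0 with h | h
    · simp [h]
    · have : (hM.eigenvalues i : ℂ) = (c : ℂ) := mul_right_cancel₀ h h1i
      rw [Complex.ofReal_inj.mp this]
  show (U * diagonal (Complex.ofReal ∘ f ∘ hM.eigenvalues) * star U) *ᵥ x = _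
  rw [← mulVec_mulVec, ← mulVec_mulVec, ← hy, h2, mulVec_smul, mulVec_mulVec, hUU', one_mulVec]

-- trace of cfc
lemma cfc_trace {n : ℕ} {C : Matrix (Fin n) (Fin n) ℂ} (hC : C.IsHermitian)
    (g : ℝ → ℝ) : (hC.cfc g).trace = ∑ i, ((g (hC.eigenvalues i) : ℝ) : ℂ) := by
  have hUU : (star (hC.eigenvectorUnitary : Matrix (Fin n) (Fin n) ℂ))
      * (hC.eigenvectorUnitary : Matrix (Fin n) (Fin n) ℂ) = 1 :=
    Unitary.star_mul_self_of_mem hC.eigenvectorUnitary.2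
  show ((hC.eigenvectorUnitary : Matrix (Fin n) (Fin n) ℂ) * diagonal (RCLike.ofReal ∘ g ∘ hC.eigenvalues)
    * star (hC.eigenvectorUnitary : Matrix (Fin n) (Fin n) ℂ)).trace = _
  rw [trace_mul_cycle, hUU, one_mul, trace_diagonal]
  rfl

-- quadratic form ≤ sum of eigenvalues
lemma quad_le_sum_eigen {n : ℕ} {C : Matrix (Fin n) (Fin n) ℂ} (hC : C.PosSemidef)
    {x : Fin n → ℂ} (hx : star x ⬝ᵥ x = 1) :
    (star x ⬝ᵥ C *ᵥ x).re ≤ ∑ i, hC.1.eigenvalues i := by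
  set U : Matrix (Fin n) (Fin n) ℂ := (hC.1.eigenvectorUnitary : Matrix (Fin n) (Fin n) ℂ)
    with hU
  have hUU' : U * (star U) = 1 := by
    simpa [hU] using unitary.mul_star_self_of_mem hC.1.eigenvectorUnitary.2
  set y : Fin n → ℂ := (star U) *ᵥ x with hy
  have hsy : star y = star x ᵥ* U := by
    rw [hy, star_mulVec, ← star_eq_conjTranspose, star_star]
  have hnorm : ∑ i, Complex.normSq (y i) = 1 := by
    have h0 : star y ⬝ᵥ y = 1 := by
      rw [hsy, hy, dotProduct_mulVec, vecMul_vecMul, hUU', vecMul_one, hx]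
    have h1 : star y ⬝ᵥ y = ((∑ i, Complex.normSq (y i) : ℝ) : ℂ) := by
      simp [dotProduct, Complex.normSq_eq_conj_mul_self, Pi.star_def]
    rw [h1] at h0
    exact_mod_cast h0
  have hquad : (star x ⬝ᵥ C *ᵥ x).re
      = ∑ i, hC.1.eigenvalues i * Complex.normSq (y i) := by
    have h2 : star x ⬝ᵥ C *ᵥ x
        = ∑ i, ((hC.1.eigenvalues i : ℂ) * ((Complex.normSq (y i) : ℝ) : ℂ)) := by
      conv_lhs => rw [show C = U * diagonal (RCLike.ofReal ∘ hC.1.eigenvalues) * star U from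
        hC.1.spectral_theorem]
      rw [show (U * diagonal (RCLike.ofReal ∘ hC.1.eigenvalues) * star U) *ᵥ x
          = U *ᵥ (diagonal ((RCLike.ofReal : ℝ → ℂ) ∘ hC.1.eigenvalues) *ᵥ y) by
        rw [hy, mulVec_mulVec, mulVec_mulVec]]
      rw [dotProduct_mulVec, ← hsy]
      simp only [dotProduct, mulVec_diagonal, Function.comp_apply, Pi.star_def]
      congr 1
      funext i
      simp only [rcoe, Complex.normSq_eq_conj_mul_self, ← Complex.star_def]
      ring
    rw [h2]
    push_cast
    simp
  rw [hquad]
  apply Finset.sum_le_sum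
  intro i _
  calc hC.1.eigenvalues i * Complex.normSq (y i) ≤ hC.1.eigenvalues i * 1 := by
        apply mul_le_mul_of_nonneg_left _ (hC.eigenvalues_nonneg i)
        calc Complex.normSq (y i) ≤ ∑ j, Complex.normSq (y j) :=
              Finset.single_le_sum (fun j _ => Complex.normSq_nonneg _) (Finset.mem_univ i)
          _ = 1 := hnorm
    _ = hC.1.eigenvalues i := mul_one _

lemma swap_dot {n : ℕ} (M : Matrix (Fin n) (Fin n) ℂ) (hM : M.IsHermitian)
    (z w : Fin n → ℂ) : star z ⬝ᵥ (M *ᵥ w) = star (M *ᵥ z) ⬝ᵥ w := by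
  rw [dotProduct_mulVec, star_mulVec, hM]

-- contrapositive kernel argument
lemma suppLE_of_ker {n : ℕ} {A B : Matrix (Fin n) (Fin n) ℂ}
    (hA : A.IsHermitian) (hB : B.IsHermitian)
    (h : ∀ x : Fin n → ℂ, B *ᵥ x = 0 → A *ᵥ x = 0) : suppLE A B := by
  rintro v ⟨u, rfl⟩
  rw [Matrix.toLin'_apply]
  let E := EuclideanSpace ℂ (Fin n)
  let K : Submodule ℂ E := LinearMap.range (Matrix.toEuclideanLin B)
  have key : ∀ w : E, w ∈ Kᗮ → B *ᵥ (WithLp.equiv 2 _ w) = 0 := by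
    intro w hw
    set w' : Fin n → ℂ := WithLp.equiv 2 _ w with hw'
    have h0 : star (B *ᵥ w') ⬝ᵥ (B *ᵥ w') = 0 := by
      have hz : (inner ℂ (Matrix.toEuclideanLin B ((WithLp.equiv 2 _).symm (B *ᵥ w'))) w : ℂ) = 0 :=
        hw _ ⟨_, rfl⟩
      rw [PiLp.inner_apply] at hz
      simp only [RCLike.inner_apply] at hz
      calc star (B *ᵥ w') ⬝ᵥ (B *ᵥ w') = star (B *ᵥ (B *ᵥ w')) ⬝ᵥ w' :=
            swap_dot B hB (B *ᵥ w') w'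
        _ = 0 := by
            rw [← hz]
            simp only [dotProduct, Pi.star_def]
            refine Finset.sum_congr rfl (fun i _ => ?_)
            rw [mul_comm]
            rfl
    rwa [dotProduct_star_self_eq_zero] at h0
  have hmem : (WithLp.equiv 2 (Fin n → ℂ)).symm (A *ᵥ u) ∈ K := by
    rw [← Submodule.orthogonal_orthogonal K]
    intro w hw
    have hBw := key w hw
    have hAw : A *ᵥ (WithLp.equiv 2 _ w) = 0 := h _ hBw
    show (inner ℂ w ((WithLp.equiv 2 (Fin n → ℂ)).symm (A *ᵥ u)) : ℂ) = 0
    rw [PiLp.inner_apply]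
    simp only [RCLike.inner_apply]
    have : star (WithLp.equiv 2 _ w) ⬝ᵥ (A *ᵥ u) = 0 := by
      rw [swap_dot A hA, hAw, star_zero, zero_dotProduct]
    rw [← this]
    simp only [dotProduct, Pi.star_def]
    refine Finset.sum_congr rfl (fun i _ => ?_)
    rw [mul_comm]
    rfl
  obtain ⟨w, hweq⟩ := hmem
  exact ⟨WithLp.equiv 2 _ w, congrArg (WithLp.equiv 2 (Fin n → ℂ)) hweq⟩

-- existence of good unit vector
lemma exists_unit_vector {n : ℕ} {A B : Matrix (Fin n) (Fin n) ℂ}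
    (hA : A.PosSemidef) (hB : B.IsHermitian) (hsupp : ¬ suppLE A B) :
    ∃ x : Fin n → ℂ, B *ᵥ x = 0 ∧ star x ⬝ᵥ x = 1 ∧ 0 < (star x ⬝ᵥ A *ᵥ x).re := by
  have h1 : ¬ ∀ x : Fin n → ℂ, B *ᵥ x = 0 → A *ᵥ x = 0 := by
    intro h; exact hsupp (suppLE_of_ker hA.1 hB h)
  push_neg at h1
  obtain ⟨x, hBx, hAx⟩ := h1
  have hq : star x ⬝ᵥ A *ᵥ x ≠ 0 := fun h => hAx ((hA.dotProduct_mulVec_zero_iff x).mp h)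
  have hqr : 0 < (star x ⬝ᵥ A *ᵥ x).re := by
    have h0 : 0 ≤ star x ⬝ᵥ A *ᵥ x := hA.dotProduct_mulVec_nonneg x
    rw [Complex.le_def] at h0
    simp only [Complex.zero_re, Complex.zero_im] at h0
    rcases lt_or_eq_of_le h0.1 with h | h
    · exact h
    · exfalso; exact hq (Complex.ext h.symm h0.2.symm)
  have hsum : star x ⬝ᵥ x = ((∑ i, Complex.normSq (x i) : ℝ) : ℂ) := by
    simp [dotProduct, Complex.normSq_eq_conj_mul_self, Pi.star_def]
  have hx0 : x ≠ 0 := by rintro rfl; simp at hAx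
  obtain ⟨i0, hi0⟩ : ∃ i, x i ≠ 0 := by
    by_contra hcon; push_neg at hcon; exact hx0 (funext hcon)
  have hspos : 0 < ∑ i, Complex.normSq (x i) :=
    Finset.sum_pos' (fun i _ => Complex.normSq_nonneg _)
      ⟨i0, Finset.mem_univ i0, Complex.normSq_pos.mpr hi0⟩
  set s : ℝ := ∑ i, Complex.normSq (x i) with hs
  set c : ℂ := ((Real.sqrt s : ℝ) : ℂ)⁻¹ with hc
  have hstarc : star c = c := by
    rw [hc, star_inv₀, Complex.star_def, Complex.conj_ofReal]
  have hcc : star c * c = ((s⁻¹ : ℝ) : ℂ) := by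
    rw [hstarc, hc, ← mul_inv]
    norm_cast
    rw [Real.mul_self_sqrt hspos.le]
  refine ⟨c • x, ?_, ?_, ?_⟩
  · rw [mulVec_smul, hBx, smul_zero]
  · rw [star_smul, smul_dotProduct, dotProduct_smul, smul_eq_mul, smul_eq_mul, ← mul_assoc,
      hcc, hsum]
    norm_cast
    field_simp
  · rw [mulVec_smul, star_smul, smul_dotProduct, dotProduct_smul, smul_eq_mul, smul_eq_mul,
      ← mul_assoc, hcc]
    rw [show (((s⁻¹ : ℝ) : ℂ)) * (star x ⬝ᵥ A *ᵥ x) = (s⁻¹ : ℝ) • (star x ⬝ᵥ A *ᵥ x) by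
      rw [Complex.real_smul]]
    rw [Complex.smul_re]
    positivity

end Helpers

/-- If `lim_{ε→0⁺} f(ε) = ∞`, `g` is monotone increasing with `g(0)=0`
and `g(t) → ∞`, and `supp A ⊄ supp B`, then `tr g(f(B+εI) A f(B+εI)) → ∞` as `ε → 0⁺`. -/
theorem stmt7 {n : ℕ}
    (f : ℝ → ℝ) (hf_pos : ∀ x ∈ Set.Ioi (0:ℝ), 0 < f x)
    (hf_cont : ContinuousOn f (Set.Ioi 0))
    (hf_lim : Filter.Tendsto f (nhdsWithin 0 (Set.Ioi 0)) Filter.atTop)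
    (g : ℝ → ℝ) (hg_nonneg : ∀ x ∈ Set.Ici (0:ℝ), 0 ≤ g x)
    (hg_cont : ContinuousOn g (Set.Ici 0))
    (hg_mono : MonotoneOn g (Set.Ici 0)) (hg0 : g 0 = 0)
    (hg_top : Filter.Tendsto g Filter.atTop Filter.atTop)
    (A B : Matrix (Fin n) (Fin n) ℂ) (hA : A.PosSemidef) (hB : B.PosSemidef)
    (hsupp : ¬ suppLE A B) :
    Filter.Tendsto
      (fun ε : ℝ => retr (matFun g
        (matFun f (B + (ε : ℂ) • 1) * A * matFun f (B + (ε : ℂ) • 1))))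
      (nhdsWithin 0 (Set.Ioi 0)) Filter.atTop := by
  classical
  obtain ⟨x, hBx, hxx, hcA⟩ := exists_unit_vector hA hB.1 hsupp
  set cA : ℝ := (star x ⬝ᵥ A *ᵥ x).re with hcAdef
  have hn : 0 < n := by
    rcases Nat.eq_zero_or_pos n with rfl | h
    · rw [show (star x ⬝ᵥ x) = 0 from by simp [dotProduct]] at hxx
      exact absurd hxx.symm one_ne_zero
    · exact h
  have hnR : (0:ℝ) < (n:ℝ) := by exact_mod_cast hn
  have key : ∀ ε : ℝ, ε ∈ Set.Ioi (0:ℝ) →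
      g (f ε * f ε * (cA / n)) ≤ retr (matFun g
        (matFun f (B + (ε : ℂ) • 1) * A * matFun f (B + (ε : ℂ) • 1))) := by
    intro ε hε
    rw [Set.mem_Ioi] at hε
    set M : Matrix (Fin n) (Fin n) ℂ := B + (ε : ℂ) • 1 with hM
    have hMh : M.IsHermitian := by
      apply hB.1.add
      rw [Matrix.IsHermitian, conjTranspose_smul, conjTranspose_one]
      congr 1
      simp [Complex.star_def, Complex.conj_ofReal]
    have hMx : M *ᵥ x = (ε : ℂ) • x := by
      rw [hM, add_mulVec, hBx, zero_add, smul_mulVec, one_mulVec]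
    have hmf : matFun f M = hMh.cfc f := dif_pos hMh
    have hFh : (matFun f M).IsHermitian := by rw [hmf]; exact cfc_isHermitian hMh f
    have hFx : matFun f M *ᵥ x = ((f ε : ℝ) : ℂ) • x := by
      rw [hmf]; exact cfc_mulVec_eigen hMh f hMx
    have hCps : (matFun f M * A * matFun f M).PosSemidef := by
      have h0 := hA.mul_mul_conjTranspose_same (matFun f M)
      rwa [hFh] at h0
    have hCh : (matFun f M * A * matFun f M).IsHermitian := hCps.1
    have h1 : retr (matFun g (matFun f M * A * matFun f M))
        = ∑ i, g (hCh.eigenvalues i) := by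
      rw [matFun, dif_pos hCh, retr, cfc_trace]
      rw [Complex.re_sum]
      simp
    have hquad : (star x ⬝ᵥ (matFun f M * A * matFun f M) *ᵥ x).re = f ε * f ε * cA := by
      have h2 : star x ⬝ᵥ (matFun f M * A * matFun f M) *ᵥ x
          = ((f ε * f ε : ℝ) : ℂ) * (star x ⬝ᵥ A *ᵥ x) := by
        rw [← mulVec_mulVec, ← mulVec_mulVec, hFx, mulVec_smul, mulVec_smul,
          dotProduct_smul, swap_dot _ hFh, hFx, star_smul, smul_dotProduct]
        rw [show star ((f ε : ℝ) : ℂ) = ((f ε : ℝ) : ℂ) by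
          rw [Complex.star_def, Complex.conj_ofReal]]
        rw [smul_eq_mul, smul_eq_mul, ← mul_assoc]
        push_cast
        ring
      rw [h2, show ((f ε * f ε : ℝ) : ℂ) * (star x ⬝ᵥ A *ᵥ x)
          = (f ε * f ε : ℝ) • (star x ⬝ᵥ A *ᵥ x) from by rw [Complex.real_smul],
        Complex.smul_re, ← hcAdef, smul_eq_mul]
    have hsum_eig : f ε * f ε * cA ≤ ∑ i, hCh.eigenvalues i := by
      rw [← hquad]; exact quad_le_sum_eigen hCps hxx
    obtain ⟨j, _, hj⟩ : ∃ j ∈ Finset.univ, f ε * f ε * (cA / n) ≤ hCh.eigenvalues j := by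
      apply Finset.exists_le_of_sum_le (Finset.univ_nonempty_iff.mpr ⟨⟨0, hn⟩⟩)
      rw [Finset.sum_const, Finset.card_univ, Fintype.card_fin, nsmul_eq_mul]
      calc (n : ℝ) * (f ε * f ε * (cA / n)) = f ε * f ε * cA := by field_simp
        _ ≤ ∑ i, hCh.eigenvalues i := hsum_eig
    have hfε : 0 < f ε := hf_pos ε hε
    have harg_nonneg : (0:ℝ) ≤ f ε * f ε * (cA / n) := by positivity
    calc g (f ε * f ε * (cA / n)) ≤ g (hCh.eigenvalues j) :=
          hg_mono harg_nonneg (hCps.eigenvalues_nonneg j) hj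
      _ ≤ ∑ i, g (hCh.eigenvalues i) :=
          Finset.single_le_sum
            (fun i _ => hg_nonneg _ (hCps.eigenvalues_nonneg i)) (Finset.mem_univ j)
      _ = retr (matFun g (matFun f M * A * matFun f M)) := h1.symm
  have hfsq : Filter.Tendsto (fun ε : ℝ => f ε * f ε * (cA / n))
      (nhdsWithin 0 (Set.Ioi 0)) Filter.atTop := by
    apply Filter.Tendsto.atTop_mul_const' (by positivity : (0:ℝ) < cA / n)
    exact hf_lim.atTop_mul_atTop₀ hf_lim
  apply Filter.tendsto_atTop_mono' _ _ (hg_top.comp hfsq)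
  exact Filter.eventually_of_mem self_mem_nhdsWithin key
end

section
/- Let n ≥ 2 be an integer and let f:(0,∞)→ℝ be a function (no regularity assumed) with the property that Σ_{k=1}^n b_k · f(a_k/b_k) = 0 holds whenever a_1,…,a_n and b_1,…,b_n are positive real numbers with Σ_{k=1}^n a_k = Σ_{k=1}^n b_k = 1. Then there is a real number c such that f(t) = c(t−1) for all t ∈ (0,∞). -/
lemma sum_aux (n : ℕ) (hn : 2 ≤ n) (x y z : ℝ) :
    ∑ k : Fin n, (if k = ⟨0, by omega⟩ then x else if k = ⟨1, by omega⟩ then y else z)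
      = x + y + ((n : ℝ) - 2) * z := by
  classical
  set i0 : Fin n := ⟨0, by omega⟩
  set i1 : Fin n := ⟨1, by omega⟩
  have h01 : i1 ≠ i0 := by simp [i0, i1, Fin.ext_iff]
  rw [← Finset.add_sum_erase _ _ (Finset.mem_univ i0)]
  rw [← Finset.add_sum_erase _ _ (Finset.mem_erase.2 ⟨h01, Finset.mem_univ i1⟩)]
  have : ∀ k ∈ ((Finset.univ.erase i0).erase i1),
      (if k = i0 then x else if k = i1 then y else z) = z := by
    intro k hk
    simp only [Finset.mem_erase] at hk
    simp [hk.1, hk.2.1]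
  rw [Finset.sum_congr rfl this, Finset.sum_const]
  have hcard : ((Finset.univ.erase i0).erase i1).card = n - 2 := by
    rw [Finset.card_erase_of_mem (Finset.mem_erase.2 ⟨h01, Finset.mem_univ i1⟩),
      Finset.card_erase_of_mem (Finset.mem_univ i0), Finset.card_univ, Fintype.card_fin]
    omega
  rw [hcard]
  have : ((n - 2 : ℕ) : ℝ) = (n : ℝ) - 2 := by
    push_cast [Nat.cast_sub hn]; ring
  simp [this, if_neg h01, h01]
  ring


/-- If `f : (0,∞) → ℝ` satisfies `∑ b_k f(a_k/b_k) = 0` for all positive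
tuples `a`, `b` of length `n ≥ 2` summing to `1`, then `f(t) = c(t−1)` for some constant `c`. -/
theorem stmt8 (n : ℕ) (hn : 2 ≤ n) (f : ℝ → ℝ)
    (hf : ∀ a b : Fin n → ℝ, (∀ k, 0 < a k) → (∀ k, 0 < b k) →
      (∑ k, a k) = 1 → (∑ k, b k) = 1 → (∑ k, b k * f (a k / b k)) = 0) :
    ∃ c : ℝ, ∀ t : ℝ, 0 < t → f t = c * (t - 1) := by
  classical
  have hN : (0:ℝ) < (n:ℝ) := by exact_mod_cast (by omega : 0 < n)
  have hN2 : (2:ℝ) ≤ (n:ℝ) := by exact_mod_cast hn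
  set z : ℝ := 1 / (2 * (n:ℝ)) with hz
  have hz0 : 0 < z := by positivity
  set s : ℝ := 1 - ((n:ℝ) - 2) * z with hs
  have hs0 : 0 < s := by
    rw [hs, hz]
    have : ((n:ℝ) - 2) / (2 * (n:ℝ)) < 1 := by
      rw [div_lt_one (by positivity)]; linarith
    rw [mul_one_div]; linarith
  -- f 1 = 0
  have hf1 : f 1 = 0 := by
    have h := hf (fun _ => 1/(n:ℝ)) (fun _ => 1/(n:ℝ))
      (fun k => by positivity) (fun k => by positivity)
      (by rw [Finset.sum_const, Finset.card_univ, Fintype.card_fin, nsmul_eq_mul]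
          field_simp)
      (by rw [Finset.sum_const, Finset.card_univ, Fintype.card_fin, nsmul_eq_mul]
          field_simp)
    simp only [div_self (show (1/(n:ℝ)) ≠ 0 by positivity)] at h
    rw [Finset.sum_const, Finset.card_univ, Fintype.card_fin, nsmul_eq_mul] at h
    have : (n:ℝ) * (1/(n:ℝ) * f 1) = f 1 := by field_simp
    rw [this] at h
    exact h
  -- key two-term relation
  have key : ∀ u p : ℝ, 0 < u → u < s → 0 < p → p < s →
      p * f (u/p) + (s-p) * f ((s-u)/(s-p)) = 0 := by
    intro u p hu hus hp hps
    set i0 : Fin n := ⟨0, by omega⟩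
    set i1 : Fin n := ⟨1, by omega⟩
    have h01 : i1 ≠ i0 := by simp [i0, i1, Fin.ext_iff]
    set a : Fin n → ℝ := fun k => if k = i0 then u else if k = i1 then s - u else z with ha
    set b : Fin n → ℝ := fun k => if k = i0 then p else if k = i1 then s - p else z with hb
    have hsum : ∀ x y : ℝ, x + (s - x) + ((n:ℝ) - 2) * z = 1 := by
      intro x y; rw [hs]; ring
    have h := hf a b
      (fun k => by by_cases h0 : k = i0 <;> by_cases h1 : k = i1 <;>
        simp [ha, h0, h1, h01, hu, hz0, sub_pos.2 hus])
      (fun k => by by_cases h0 : k = i0 <;> by_cases h1 : k = i1 <;>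
        simp [hb, h0, h1, h01, hp, hz0, sub_pos.2 hps])
      (by rw [ha]; rw [sum_aux n hn]; exact hsum u u)
      (by rw [hb]; rw [sum_aux n hn]; exact hsum p p)
    have hterm : ∀ k : Fin n, b k * f (a k / b k) =
        if k = i0 then p * f (u/p) else if k = i1 then (s-p) * f ((s-u)/(s-p)) else z * f (z/z) := by
      intro k
      by_cases h0 : k = i0 <;> by_cases h1 : k = i1 <;> simp [ha, hb, h0, h1, h01]
    rw [Finset.sum_congr rfl (fun k _ => hterm k), sum_aux n hn] at h
    rw [div_self (ne_of_gt hz0), hf1, mul_zero, mul_zero, add_zero] at h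
    exact h
  -- main relation
  have main : ∀ t r : ℝ, 1 < t → 0 < r → r < 1 →
      (1 - r) * f t + (t - 1) * f r = 0 := by
    intro t r ht hr hr1
    have htr : 0 < t - r := by linarith
    have htr' : (t - r) ≠ 0 := ne_of_gt htr
    set p : ℝ := s * (1 - r) / (t - r) with hp
    set u : ℝ := t * p with hu
    have hp0 : 0 < p := by rw [hp]; exact div_pos (by nlinarith) htr
    have hps : p < s := by
      rw [hp, div_lt_iff₀ htr]
      nlinarith
    have hu0 : 0 < u := by rw [hu]; positivity
    have hus : u < s := by
      rw [hu, hp, mul_div_assoc', div_lt_iff₀ htr]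
      nlinarith [mul_pos (mul_pos hs0 hr) (show (0:ℝ) < t - 1 by linarith)]
    have h := key u p hu0 hus hp0 hps
    have hup : u / p = t := by rw [hu, mul_div_assoc, div_self (ne_of_gt hp0), mul_one]
    have hspne : s - p ≠ 0 := sub_ne_zero.2 (ne_of_lt hps).symm
    have hvq : (s - u) / (s - p) = r := by
      rw [div_eq_iff hspne, hu, hp]
      field_simp
      ring
    rw [hup, hvq] at h
    -- h : p * f t + (s - p) * f r = 0
    have hsp : s - p = s * (t - 1) / (t - r) := by rw [hp]; field_simp; ring
    rw [hsp, hp] at h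
    have h2 : s / (t - r) * ((1 - r) * f t + (t - 1) * f r) = 0 := by
      linear_combination h
    rcases mul_eq_zero.1 h2 with h3 | h3
    · exact absurd h3 (ne_of_gt (div_pos hs0 htr))
    · exact h3
  refine ⟨f 2, fun t ht => ?_⟩
  rcases lt_trichotomy t 1 with h | h | h
  · have key2 := main 2 t (by norm_num) ht h
    linear_combination key2
  · rw [h, hf1]; ring
  · have key2 := main t (1/2) h (by norm_num) (by norm_num)
    have key3 := main 2 (1/2) (by norm_num) (by norm_num) (by norm_num)
    linear_combination 2 * key2 - 2 * (t - 1) * key3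
end

section
/- Let n ≥ 1 be an integer, α ∈ (0,1)∪(1,∞), and let t_1, …, t_n be positive real numbers. If n · Σ_{k=1}^n t_k^{2α²/(1−α)} = (Σ_{k=1}^n t_k^{−2α}) · (Σ_{k=1}^n t_k^{2α/(1−α)}), then t_1 = t_2 = … = t_n. -/
lemma cheb_aux {n : ℕ} (t : Fin n → ℝ) (ht : ∀ k, 0 < t k) (e1 e2 : ℝ)
    (he1 : e1 < 0) (he2 : e2 ≠ 0)
    (heq : (n : ℝ) * ∑ k, t k ^ e1 * t k ^ e2 =
      (∑ k, t k ^ e1) * (∑ k, t k ^ e2)) :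
    ∀ i j, t i = t j := by
  set x : Fin n → ℝ := fun k => t k ^ e1 with hx
  set y : Fin n → ℝ := fun k => t k ^ e2 with hy
  have key : ∑ i : Fin n, ∑ j : Fin n, (x i - x j) * (y i - y j) = 0 := by
    have : ∑ i : Fin n, ∑ j : Fin n, (x i - x j) * (y i - y j)
        = 2 * ((n : ℝ) * ∑ k, x k * y k - (∑ k, x k) * (∑ k, y k)) := by
      simp only [sub_mul, mul_sub, Finset.sum_sub_distrib, ← Finset.sum_mul, ← Finset.mul_sum,
        Finset.sum_const, Finset.card_univ, Fintype.card_fin, nsmul_eq_mul, mul_assoc]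
      ring
    rw [this, heq]; ring
  -- strict monotonicity facts
  have hxanti : ∀ {i j}, t i < t j → x j < x i := fun h =>
    Real.rpow_lt_rpow_of_neg (ht _) h he1
  rcases he2.lt_or_gt with h2 | h2
  · -- e2 < 0 : all terms nonneg
    have hsign : ∀ i ∈ Finset.univ, ∀ j ∈ Finset.univ,
        (0:ℝ) ≤ (x i - x j) * (y i - y j) := by
      intro i _ j _
      rcases lt_trichotomy (t i) (t j) with h | h | h
      · have h1 := hxanti h
        have h2' := Real.rpow_lt_rpow_of_neg (ht i) h h2
        nlinarith
      · simp [hx, hy, h]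
      · have h1 := hxanti h
        have h2' := Real.rpow_lt_rpow_of_neg (ht j) h h2
        nlinarith
    have hz : ∀ i ∈ Finset.univ, ∀ j ∈ (Finset.univ : Finset (Fin n)),
        (x i - x j) * (y i - y j) = 0 := by
      have := (Finset.sum_eq_zero_iff_of_nonneg
        (fun i _ => Finset.sum_nonneg (fun j hj => hsign i (Finset.mem_univ i) j hj))).mp key
      intro i hi j hj
      exact (Finset.sum_eq_zero_iff_of_nonneg (hsign i hi)).mp (this i hi) j hj
    intro i j
    by_contra hne
    rcases lt_or_gt_of_ne hne with h | h
    · have h1 := hxanti h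
      have h2' := Real.rpow_lt_rpow_of_neg (ht i) h h2
      have := hz i (Finset.mem_univ i) j (Finset.mem_univ j)
      nlinarith
    · have h1 := hxanti h
      have h2' := Real.rpow_lt_rpow_of_neg (ht j) h h2
      have := hz i (Finset.mem_univ i) j (Finset.mem_univ j)
      nlinarith
  · -- 0 < e2 : all terms nonpos
    have hsign : ∀ i ∈ Finset.univ, ∀ j ∈ (Finset.univ : Finset (Fin n)),
        (x i - x j) * (y i - y j) ≤ 0 := by
      intro i _ j _
      rcases lt_trichotomy (t i) (t j) with h | h | h
      · have h1 := hxanti h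
        have h2' := Real.rpow_lt_rpow (ht i).le h h2
        nlinarith
      · simp [hx, hy, h]
      · have h1 := hxanti h
        have h2' := Real.rpow_lt_rpow (ht j).le h h2
        nlinarith
    have hz : ∀ i ∈ Finset.univ, ∀ j ∈ (Finset.univ : Finset (Fin n)),
        (x i - x j) * (y i - y j) = 0 := by
      have := (Finset.sum_eq_zero_iff_of_nonpos
        (fun i _ => Finset.sum_nonpos (fun j hj => hsign i (Finset.mem_univ i) j hj))).mp key
      intro i hi j hj
      exact (Finset.sum_eq_zero_iff_of_nonpos (hsign i hi)).mp (this i hi) j hj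
    intro i j
    by_contra hne
    rcases lt_or_gt_of_ne hne with h | h
    · have h1 := hxanti h
      have h2' := Real.rpow_lt_rpow (ht i).le h h2
      have := hz i (Finset.mem_univ i) j (Finset.mem_univ j)
      nlinarith
    · have h1 := hxanti h
      have h2' := Real.rpow_lt_rpow (ht j).le h h2
      have := hz i (Finset.mem_univ i) j (Finset.mem_univ j)
      nlinarith

/-- Equality case of Tchebychef's inequality for the power sequences
arising in the proof of the structure of Rényi divergence preservers: if
`n · ∑ t_k^{2α²/(1−α)} = (∑ t_k^{−2α}) · (∑ t_k^{2α/(1−α)})` for positive `t_k`,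
then all the `t_k` are equal. -/
theorem stmt13 (n : ℕ) (hn : 1 ≤ n) (α : ℝ) (hα : α ∈ Set.Ioo (0:ℝ) 1 ∪ Set.Ioi (1:ℝ))
    (t : Fin n → ℝ) (ht : ∀ k, 0 < t k)
    (heq : (n : ℝ) * ∑ k, t k ^ (2 * α ^ 2 / (1 - α)) =
      (∑ k, t k ^ (-(2 * α))) * (∑ k, t k ^ (2 * α / (1 - α)))) :
    ∀ i j, t i = t j := by
  have hα0 : 0 < α := by rcases hα with ⟨h, _⟩ | h; exact h; linarith [Set.mem_Ioi.mp h]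
  have hα1 : α ≠ 1 := by rcases hα with ⟨_, h⟩ | h; exact ne_of_lt h; exact ne_of_gt (Set.mem_Ioi.mp h)
  have h1α : (1 : ℝ) - α ≠ 0 := by intro h; apply hα1; linarith
  have he1 : -(2 * α) < 0 := by linarith
  have he2 : 2 * α / (1 - α) ≠ 0 := by
    apply div_ne_zero (by linarith) h1α
  have hexp : ∀ k, t k ^ (2 * α ^ 2 / (1 - α)) = t k ^ (-(2*α)) * t k ^ (2 * α / (1 - α)) := by
    intro k
    rw [← Real.rpow_add (ht k)]
    congr 1
    field_simp
    ring
  apply cheb_aux t ht (-(2*α)) (2 * α / (1 - α)) he1 he2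
  rw [← heq]
  congr 1
  exact Finset.sum_congr rfl fun k _ => (hexp k).symm
end

section
/- Let H be a finite-dimensional complex Hilbert space. Let f:(0,∞)→(0,∞) be continuous with lim_{ε→0⁺} f(ε)=0, and let g:[0,∞)→[0,∞) be an injective continuous function with g(0)=0; let f₀ be the continuous extension of f with f₀(0)=0, and write D'_{f,g}(A‖B) = tr g(f₀(B) A f₀(B)) for density operators A,B. Suppose φ: S(H) → S(H) satisfies D'_{f,g}(φ(A)‖φ(B)) = D'_{f,g}(A‖B) for all A, B ∈ S(H). Then φ maps rank-one projections to rank-one projections, and tr(φ(P)φ(Q)) = tr(PQ) for all rank-one projections P, Q on H. -/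
open Matrix
open scoped ComplexOrder

section Aux
variable {n : ℕ}



lemma matFun_eq {A : Matrix (Fin n) (Fin n) ℂ} (hA : A.IsHermitian) (h : ℝ → ℝ) :
    matFun h A = (hA.eigenvectorUnitary : Matrix (Fin n) (Fin n) ℂ) *
      diagonal (RCLike.ofReal ∘ h ∘ hA.eigenvalues) *
      star (hA.eigenvectorUnitary : Matrix (Fin n) (Fin n) ℂ) := by
  rw [matFun, dif_pos hA]; rfl

lemma star_mul_self_eigU {A : Matrix (Fin n) (Fin n) ℂ} (hA : A.IsHermitian) :
    star (hA.eigenvectorUnitary : Matrix (Fin n) (Fin n) ℂ) *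
      (hA.eigenvectorUnitary : Matrix (Fin n) (Fin n) ℂ) = 1 :=
  Unitary.coe_star_mul_self _

lemma mul_star_self_eigU {A : Matrix (Fin n) (Fin n) ℂ} (hA : A.IsHermitian) :
    (hA.eigenvectorUnitary : Matrix (Fin n) (Fin n) ℂ) *
      star (hA.eigenvectorUnitary : Matrix (Fin n) (Fin n) ℂ) = 1 :=
  Unitary.coe_mul_star_self _

lemma trace_matFun {A : Matrix (Fin n) (Fin n) ℂ} (hA : A.IsHermitian) (h : ℝ → ℝ) :
    (matFun h A).trace = ∑ i, ((h (hA.eigenvalues i) : ℝ) : ℂ) := by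
  rw [matFun_eq hA h, trace_mul_cycle, star_mul_self_eigU hA, one_mul,
    trace_diagonal]
  rfl

lemma unitary_conj_inj {U : Matrix (Fin n) (Fin n) ℂ} (hU : U ∈ unitary (Matrix (Fin n) (Fin n) ℂ))
    {M N : Matrix (Fin n) (Fin n) ℂ} (h : U * M * star U = U * N * star U) : M = N := by
  have h1 : star U * U = 1 := Unitary.star_mul_self_of_mem hU
  have e : ∀ M : Matrix (Fin n) (Fin n) ℂ, star U * (U * M * star U) * U = M := by
    intro M
    simp only [mul_assoc, h1, mul_one]
    rw [← mul_assoc, h1, one_mul]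
  rw [← e M, ← e N, h]

lemma spectral_sq {A : Matrix (Fin n) (Fin n) ℂ} (hA : A.IsHermitian) :
    A * A = (hA.eigenvectorUnitary : Matrix (Fin n) (Fin n) ℂ) *
      (diagonal (RCLike.ofReal ∘ hA.eigenvalues) * diagonal (RCLike.ofReal ∘ hA.eigenvalues)) *
      star (hA.eigenvectorUnitary : Matrix (Fin n) (Fin n) ℂ) := by
  have h1 : star (hA.eigenvectorUnitary : Matrix (Fin n) (Fin n) ℂ) *
      (hA.eigenvectorUnitary : Matrix (Fin n) (Fin n) ℂ) = 1 := Unitary.coe_star_mul_self _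
  conv_lhs => rw [hA.spectral_theorem, Unitary.conjStarAlgAut_apply]
  simp only [mul_assoc]
  rw [← mul_assoc (star (hA.eigenvectorUnitary : Matrix (Fin n) (Fin n) ℂ)), h1, one_mul]

lemma eig_sq {A : Matrix (Fin n) (Fin n) ℂ} (hA : A.IsHermitian) (c : ℝ)
    (hAA : A * A = (c : ℂ) • A) : ∀ i, hA.eigenvalues i ^ 2 = c * hA.eigenvalues i := by
  have h1 := spectral_sq hA
  rw [hAA] at h1
  conv_lhs at h1 => rw [hA.spectral_theorem, Unitary.conjStarAlgAut_apply]
  have h1' : (hA.eigenvectorUnitary : Matrix (Fin n) (Fin n) ℂ) *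
      ((c : ℂ) • diagonal (RCLike.ofReal ∘ hA.eigenvalues)) *
      star (hA.eigenvectorUnitary : Matrix (Fin n) (Fin n) ℂ) =
      (hA.eigenvectorUnitary : Matrix (Fin n) (Fin n) ℂ) *
      (diagonal (RCLike.ofReal ∘ hA.eigenvalues) * diagonal (RCLike.ofReal ∘ hA.eigenvalues)) *
      star (hA.eigenvectorUnitary : Matrix (Fin n) (Fin n) ℂ) := by
    rw [← h1]
    simp [smul_mul_assoc, mul_smul_comm]
  have h2 := unitary_conj_inj (hA.eigenvectorUnitary).2 h1'
  rw [diagonal_mul_diagonal, ← diagonal_smul, diagonal_eq_diagonal_iff] at h2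
  intro i
  have h3 := (h2 i).symm
  simp only [Pi.mul_apply, Pi.smul_apply, Function.comp_apply, smul_eq_mul] at h3
  have h4 : ((hA.eigenvalues i * hA.eigenvalues i : ℝ) : ℂ) = ((c * hA.eigenvalues i : ℝ) : ℂ) := by
    push_cast; exact h3
  rw [sq]
  exact Complex.ofReal_inj.mp h4

lemma herm_eq_zero {A : Matrix (Fin n) (Fin n) ℂ} (hA : A.IsHermitian)
    (h0 : ∀ i, hA.eigenvalues i = 0) : A = 0 := by
  have : diagonal (RCLike.ofReal ∘ hA.eigenvalues) = (0 : Matrix (Fin n) (Fin n) ℂ) := by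
    ext i j
    simp [diagonal_apply, h0]
  rw [hA.spectral_theorem, Unitary.conjStarAlgAut_apply, this, mul_zero, zero_mul]


lemma vmv_conjT (a b : Fin n → ℂ) : (vecMulVec a b)ᴴ = vecMulVec (star b) (star a) := by
  ext i j; simp [vecMulVec_apply, conjTranspose_apply, mul_comm]

lemma vmv_mul_vmv (a b c d : Fin n → ℂ) :
    vecMulVec a b * vecMulVec c d = (b ⬝ᵥ c) • vecMulVec a d := by
  ext i j
  simp only [mul_apply, vecMulVec_apply, Matrix.smul_apply, dotProduct, smul_eq_mul, Finset.sum_mul]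
  apply Finset.sum_congr rfl
  intros; ring

lemma mul_vmv (M : Matrix (Fin n) (Fin n) ℂ) (a b : Fin n → ℂ) :
    M * vecMulVec a b = vecMulVec (M *ᵥ a) b := by
  ext i j
  simp only [mul_apply, vecMulVec_apply, mulVec, dotProduct, Finset.sum_mul]
  apply Finset.sum_congr rfl
  intros; ring

lemma trace_vmv (a b : Fin n → ℂ) : (vecMulVec a b).trace = a ⬝ᵥ b := by
  simp [Matrix.trace, vecMulVec_apply, dotProduct, Matrix.diag]

lemma posSemidef_vmv (x : Fin n → ℂ) : (vecMulVec x (star x)).PosSemidef := by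
  rw [vecMulVec_eq Unit, ← conjTranspose_replicateCol]
  exact posSemidef_self_mul_conjTranspose _

lemma conj_single (U : Matrix (Fin n) (Fin n) ℂ) (i0 : Fin n) :
    U * diagonal (fun a => if a = i0 then (1:ℂ) else 0) * star U
      = vecMulVec (fun j => U j i0) (star fun j => U j i0) := by
  ext j k
  rw [mul_apply]
  simp only [mul_diagonal, star_apply, vecMulVec_apply, Pi.star_apply]
  rw [Finset.sum_eq_single i0]
  · simp
  · intro b _ hb
    simp [hb]
  · simp

lemma trace_eq_sum_ev {A : Matrix (Fin n) (Fin n) ℂ} (hA : A.IsHermitian) :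
    A.trace = ∑ i, ((hA.eigenvalues i : ℝ) : ℂ) := by
  conv_lhs => rw [hA.spectral_theorem, Unitary.conjStarAlgAut_apply]
  rw [trace_mul_cycle, Unitary.coe_star_mul_self, one_mul, trace_diagonal]
  rfl


lemma trace_sq_eq {A : Matrix (Fin n) (Fin n) ℂ} (hA : A.IsHermitian) :
    (A * A).trace = ∑ i, ((hA.eigenvalues i ^ 2 : ℝ) : ℂ) := by
  rw [spectral_sq hA, trace_mul_cycle, Unitary.coe_star_mul_self, one_mul,
    diagonal_mul_diagonal, trace_diagonal]
  apply Finset.sum_congr rfl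
  intro i _
  push_cast
  show (hA.eigenvalues i : ℂ) * (hA.eigenvalues i : ℂ) = _
  rw [sq]

lemma isRankOneProj_of {A : Matrix (Fin n) (Fin n) ℂ} (hA : A.PosSemidef)
    (h1 : A.trace = 1) (h2 : (A * A).trace = 1) : IsRankOneProj A := by
  have hH := hA.isHermitian
  set ev := hH.eigenvalues with hev
  have hnn : ∀ i, 0 ≤ ev i := hA.eigenvalues_nonneg
  have s1 : ∑ i, ev i = 1 := by
    have h := trace_eq_sum_ev hH
    rw [h1] at h
    exact_mod_cast h.symm
  have s2 : ∑ i, ev i ^ 2 = 1 := by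
    have h := trace_sq_eq hH
    rw [h2] at h
    exact_mod_cast h.symm
  have le1 : ∀ i, ev i ≤ 1 := by
    intro i
    rw [← s1]
    exact Finset.single_le_sum (fun j _ => hnn j) (Finset.mem_univ i)
  have zsum : ∑ i, ev i * (1 - ev i) = 0 := by
    have : ∀ i, ev i * (1 - ev i) = ev i - ev i ^ 2 := fun i => by ring
    simp only [this, Finset.sum_sub_distrib, s1, s2, sub_self]
  have hz : ∀ i ∈ Finset.univ, ev i * (1 - ev i) = 0 := by
    rw [← Finset.sum_eq_zero_iff_of_nonneg]
    · exact zsum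
    · intro i _
      exact mul_nonneg (hnn i) (by linarith [le1 i])
  have h01 : ∀ i, ev i = 0 ∨ ev i = 1 := by
    intro i
    rcases mul_eq_zero.mp (hz i (Finset.mem_univ i)) with h | h
    · exact Or.inl h
    · exact Or.inr (by linarith)
  have hex : ∃ i0, ev i0 = 1 := by
    by_contra hc
    push_neg at hc
    have : ∀ i ∈ Finset.univ, ev i = 0 := fun i _ => (h01 i).resolve_right (hc i)
    rw [Finset.sum_congr rfl this, Finset.sum_const_zero] at s1
    norm_num at s1
  obtain ⟨i0, hi0⟩ := hex
  have hrest : ∀ j, j ≠ i0 → ev j = 0 := by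
    intro j hj
    have hsplit := Finset.add_sum_erase Finset.univ ev (Finset.mem_univ i0)
    rw [s1, hi0] at hsplit
    have : ∑ k ∈ Finset.univ.erase i0, ev k = 0 := by linarith
    have := (Finset.sum_eq_zero_iff_of_nonneg (fun k _ => hnn k)).mp this
    exact this j (Finset.mem_erase.mpr ⟨hj, Finset.mem_univ j⟩)
  -- the eigenvector column
  have hU : (hH.eigenvectorUnitary : Matrix (Fin n) (Fin n) ℂ) ∈
      unitary (Matrix (Fin n) (Fin n) ℂ) := (hH.eigenvectorUnitary).2
  refine ⟨fun j => (hH.eigenvectorUnitary : Matrix (Fin n) (Fin n) ℂ) j i0, ?_, ?_⟩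
  · have h1 : star (hH.eigenvectorUnitary : Matrix (Fin n) (Fin n) ℂ) *
        (hH.eigenvectorUnitary : Matrix (Fin n) (Fin n) ℂ) = 1 := Unitary.coe_star_mul_self _
    have := congrFun (congrFun h1 i0) i0
    simp only [mul_apply, star_apply, one_apply_eq] at this
    rw [← this]
    apply Finset.sum_congr rfl
    intros; rfl
  · have hd : (RCLike.ofReal ∘ ev : Fin n → ℂ) = fun a => if a = i0 then 1 else 0 := by
      funext a
      by_cases ha : a = i0
      · subst ha; simp [hi0]
      · simp [ha, hrest a ha]
    conv_lhs => rw [hH.spectral_theorem, Unitary.conjStarAlgAut_apply]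
    rw [show diagonal (RCLike.ofReal ∘ ev) = diagonal (fun a => if a = i0 then (1:ℂ) else 0) by
      rw [hd]]
    exact conj_single _ i0

lemma matFun_isHermitian {A : Matrix (Fin n) (Fin n) ℂ} (hA : A.IsHermitian) (h : ℝ → ℝ) :
    (matFun h A).IsHermitian := by
  rw [matFun_eq hA h]
  have hd : (diagonal (RCLike.ofReal ∘ h ∘ hA.eigenvalues) : Matrix (Fin n) (Fin n) ℂ)ᴴ
      = diagonal (RCLike.ofReal ∘ h ∘ hA.eigenvalues) := by
    rw [diagonal_conjTranspose]
    rw [diagonal_eq_diagonal_iff]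
    intro i
    simp [Pi.star_apply, RCLike.star_def, RCLike.conj_ofReal]
  show _ᴴ = _
  rw [conjTranspose_mul, conjTranspose_mul, hd, star_eq_conjTranspose,
    conjTranspose_conjTranspose, ← star_eq_conjTranspose, mul_assoc]

lemma retr_matFun {A : Matrix (Fin n) (Fin n) ℂ} (hA : A.IsHermitian) (h : ℝ → ℝ) :
    retr (matFun h A) = ∑ i, h (hA.eigenvalues i) := by
  rw [retr, trace_matFun hA h, ← Complex.ofReal_sum, Complex.ofReal_re]

lemma eigenvalues_zero_of_zero (h0 : (0 : Matrix (Fin n) (Fin n) ℂ).IsHermitian) :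
    ∀ i, h0.eigenvalues i = 0 := by
  have hnn : ∀ i, 0 ≤ h0.eigenvalues i := (Matrix.PosSemidef.zero (n := Fin n) (R := ℂ)).eigenvalues_nonneg
  have htr : ∑ i, h0.eigenvalues i = 0 := by
    have h := trace_eq_sum_ev h0
    rw [Matrix.trace_zero] at h
    exact_mod_cast h.symm
  intro i
  exact (Finset.sum_eq_zero_iff_of_nonneg (fun j _ => hnn j)).mp htr i (Finset.mem_univ i)

lemma mul_conj_diag_eq_zero_iff {A U : Matrix (Fin n) (Fin n) ℂ}
    (hU : U ∈ unitary (Matrix (Fin n) (Fin n) ℂ)) (d : Fin n → ℂ) :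
    A * (U * diagonal d * star U) = 0 ↔ ∀ i j, (A * U) i j * d j = 0 := by
  have h1 : star U * U = 1 := Unitary.star_mul_self_of_mem hU
  constructor
  · intro h
    have h2 := congrArg (fun X => X * U) h
    simp only [zero_mul] at h2
    have h3 : A * U * diagonal d = 0 := by
      calc A * U * diagonal d = A * (U * diagonal d * star U) * U := by
            simp only [mul_assoc, h1, mul_one]
          _ = 0 := h2
    intro i j
    have := congrFun (congrFun h3 i) j
    rwa [mul_diagonal] at this
  · intro h
    have h3 : A * U * diagonal d = 0 := by
      ext i j
      rw [mul_diagonal]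
      exact h i j
    calc A * (U * diagonal d * star U) = (A * U * diagonal d) * star U := by
          simp only [mul_assoc]
        _ = 0 := by rw [h3, zero_mul]

lemma extZero_eq_zero_iff {f : ℝ → ℝ} (hf_pos : ∀ x ∈ Set.Ioi (0:ℝ), 0 < f x)
    {t : ℝ} (ht : 0 ≤ t) : extZero f t = 0 ↔ t = 0 := by
  rcases eq_or_lt_of_le ht with h | h
  · simp [extZero, ← h]
  · simp only [extZero, if_pos h]
    constructor
    · intro hc
      exact absurd hc (ne_of_gt (hf_pos t h))
    · intro hc
      rw [hc] at h
      exact absurd h (lt_irrefl 0)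

lemma dfg_eq_zero_iff {f : ℝ → ℝ} (hf_pos : ∀ x ∈ Set.Ioi (0:ℝ), 0 < f x)
    {g : ℝ → ℝ} (hg_nonneg : ∀ x ∈ Set.Ici (0:ℝ), 0 ≤ g x)
    (hg_inj : Set.InjOn g (Set.Ici 0)) (hg0 : g 0 = 0)
    (A B : Density n) : Dfg f g A.1 B.1 = 0 ↔ A.1 * B.1 = 0 := by
  have hB : B.1.IsHermitian := B.2.1.isHermitian
  set C := matFun (extZero f) B.1 with hCdef
  have hC : C.IsHermitian := matFun_isHermitian hB _
  have hX : (C * A.1 * C).PosSemidef := by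
    have := Matrix.PosSemidef.conjTranspose_mul_mul_same A.2.1 C
    rwa [hC.eq] at this
  have hXH : (C * A.1 * C).IsHermitian := hX.isHermitian
  -- equivalence A*C = 0 ↔ A*B = 0
  have hACB : (A.1 * C = 0) ↔ (A.1 * B.1 = 0) := by
    rw [show C = (hB.eigenvectorUnitary : Matrix (Fin n) (Fin n) ℂ) *
        diagonal (RCLike.ofReal ∘ extZero f ∘ hB.eigenvalues) *
        star (hB.eigenvectorUnitary : Matrix (Fin n) (Fin n) ℂ) from matFun_eq hB _]
    conv_rhs => rw [hB.spectral_theorem, Unitary.conjStarAlgAut_apply]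
    rw [mul_conj_diag_eq_zero_iff (hB.eigenvectorUnitary).2,
      mul_conj_diag_eq_zero_iff (hB.eigenvectorUnitary).2]
    have key : ∀ j, (RCLike.ofReal (extZero f (hB.eigenvalues j)) : ℂ) = 0 ↔
        (RCLike.ofReal (hB.eigenvalues j) : ℂ) = 0 := by
      intro j
      have hnn := B.2.1.eigenvalues_nonneg j
      constructor
      · intro h
        exact RCLike.ofReal_eq_zero.mpr
          ((extZero_eq_zero_iff hf_pos hnn).mp (RCLike.ofReal_eq_zero.mp h))
      · intro h
        exact RCLike.ofReal_eq_zero.mpr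
          ((extZero_eq_zero_iff hf_pos hnn).mpr (RCLike.ofReal_eq_zero.mp h))
    constructor
    · intro h i j
      rcases mul_eq_zero.mp (h i j) with h' | h'
      · exact mul_eq_zero.mpr (Or.inl h')
      · exact mul_eq_zero.mpr (Or.inr ((key j).mp h'))
    · intro h i j
      rcases mul_eq_zero.mp (h i j) with h' | h'
      · exact mul_eq_zero.mpr (Or.inl h')
      · exact mul_eq_zero.mpr (Or.inr ((key j).mpr h'))
  constructor
  · intro hD
    rw [Dfg, ← hCdef, retr_matFun hXH g] at hD
    have hz : ∀ i ∈ Finset.univ, g (hXH.eigenvalues i) = 0 :=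
      (Finset.sum_eq_zero_iff_of_nonneg
        (fun i _ => hg_nonneg _ (hX.eigenvalues_nonneg i))).mp hD
    have hev0 : ∀ i, hXH.eigenvalues i = 0 := by
      intro i
      refine hg_inj (hX.eigenvalues_nonneg i) (le_refl (0:ℝ)) ?_
      rw [hg0]
      exact hz i (Finset.mem_univ i)
    have hX0 : C * A.1 * C = 0 := herm_eq_zero hXH hev0
    -- deduce A * C = 0
    open scoped MatrixOrder in
    obtain ⟨S, hSH', -, hSS⟩ := CFC.exists_sqrt_of_isSelfAdjoint_of_quasispectrumRestricts
      A.2.1.isHermitian (QuasispectrumRestricts.nnreal_of_nonneg A.2.1.nonneg)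
    have hSH : S.IsHermitian := hSH'
    have hSC : (S * C)ᴴ * (S * C) = 0 := by
      rw [conjTranspose_mul, hSH.eq, hC.eq]
      calc C * S * (S * C) = C * (S * S) * C := by simp only [mul_assoc]
        _ = 0 := by rw [hSS]; exact hX0
    have hSC0 : S * C = 0 := Matrix.conjTranspose_mul_self_eq_zero.mp hSC
    have hAC : A.1 * C = 0 := by
      calc A.1 * C = S * (S * C) := by rw [← mul_assoc, hSS]
        _ = 0 := by rw [hSC0, mul_zero]
    exact hACB.mp hAC
  · intro hAB
    have hAC : A.1 * C = 0 := hACB.mpr hAB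
    have hCA : C * A.1 = 0 := by
      have := congrArg conjTranspose hAC
      rwa [conjTranspose_mul, hC.eq, A.2.1.isHermitian.eq, conjTranspose_zero] at this
    have hX0 : C * A.1 * C = 0 := by rw [hCA, zero_mul]
    rw [Dfg, ← hCdef, hX0]
    have h0 : (0 : Matrix (Fin n) (Fin n) ℂ).IsHermitian := isHermitian_zero
    rw [retr_matFun h0 g]
    apply Finset.sum_eq_zero
    intro i _
    rw [eigenvalues_zero_of_zero h0 i, hg0]

lemma matFun_proj {A : Matrix (Fin n) (Fin n) ℂ} (hA : A.IsHermitian) (hAA : A * A = A)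
    {h : ℝ → ℝ} (h0 : h 0 = 0) : matFun h A = ((h 1 : ℝ) : ℂ) • A := by
  have hev : ∀ i, hA.eigenvalues i ^ 2 = 1 * hA.eigenvalues i :=
    eig_sq hA 1 (by rw [hAA]; norm_num)
  have h01 : ∀ i, hA.eigenvalues i = 0 ∨ hA.eigenvalues i = 1 := by
    intro i
    have := hev i
    rcases mul_eq_zero.mp (show hA.eigenvalues i * (hA.eigenvalues i - 1) = 0 by ring_nf; nlinarith [hev i]) with h' | h'
    · exact Or.inl h'
    · exact Or.inr (by linarith)
  have hd : (diagonal (RCLike.ofReal ∘ h ∘ hA.eigenvalues) : Matrix (Fin n) (Fin n) ℂ) =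
      ((h 1 : ℝ) : ℂ) • (diagonal (RCLike.ofReal ∘ hA.eigenvalues) : Matrix (Fin n) (Fin n) ℂ) := by
    have hds : (diagonal (((h 1 : ℝ) : ℂ) • (RCLike.ofReal ∘ hA.eigenvalues)) : Matrix (Fin n) (Fin n) ℂ) =
        ((h 1 : ℝ) : ℂ) • (diagonal (RCLike.ofReal ∘ hA.eigenvalues) : Matrix (Fin n) (Fin n) ℂ) :=
      diagonal_smul _ _
    rw [← hds, diagonal_eq_diagonal_iff]
    intro i
    rcases h01 i with h' | h' <;>
      simp [Function.comp_apply, h', h0, smul_eq_mul]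
  rw [matFun_eq hA h, hd]
  simp only [Matrix.smul_mul, Matrix.mul_smul]
  congr 1
  exact hA.spectral_theorem.symm

lemma retr_matFun_scaled {X : Matrix (Fin n) (Fin n) ℂ} (hX : X.PosSemidef) {c : ℝ}
    (hXX : X * X = (c : ℂ) • X) (htr : X.trace = (c : ℂ)) {g : ℝ → ℝ} (hg0 : g 0 = 0) :
    retr (matFun g X) = g c := by
  have hXH := hX.isHermitian
  have hev := eig_sq hXH c hXX
  have hsum : ∑ i, hXH.eigenvalues i = c := by
    have h := trace_eq_sum_ev hXH
    rw [htr] at h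
    exact_mod_cast h.symm
  rw [retr_matFun hXH g]
  rcases eq_or_ne c 0 with hc | hc
  · subst hc
    have : ∀ i, hXH.eigenvalues i = 0 := by
      intro i
      have := hev i
      rw [zero_mul, pow_eq_zero_iff (two_ne_zero)] at this
      exact this
    calc ∑ i, g (hXH.eigenvalues i) = ∑ _i : Fin n, g 0 := by
          apply Finset.sum_congr rfl
          intro i _
          rw [this i]
      _ = 0 := by simp [hg0]
      _ = g 0 := hg0.symm
  · have key : ∀ i, g (hXH.eigenvalues i) = (g c / c) * hXH.eigenvalues i := by
      intro i
      have h2 : hXH.eigenvalues i * (hXH.eigenvalues i - c) = 0 := by nlinarith [hev i]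
      rcases mul_eq_zero.mp h2 with h' | h'
      · rw [h', hg0, mul_zero]
      · have : hXH.eigenvalues i = c := by linarith
        rw [this, div_mul_cancel₀ _ hc]
    calc ∑ i, g (hXH.eigenvalues i) = ∑ i, (g c / c) * hXH.eigenvalues i :=
          Finset.sum_congr rfl (fun i _ => key i)
      _ = (g c / c) * ∑ i, hXH.eigenvalues i := by rw [Finset.mul_sum]
      _ = g c := by rw [hsum, div_mul_cancel₀ _ hc]

lemma dot_star_right (a b : Fin n → ℂ) : a ⬝ᵥ star b = star (star a ⬝ᵥ b) := by
  simp [dotProduct, mul_comm]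

lemma trace_rankOne_pair {x y : Fin n → ℂ} :
    (vecMulVec x (star x) * vecMulVec y (star y)).trace
      = (Complex.normSq (star x ⬝ᵥ y) : ℂ) := by
  rw [vmv_mul_vmv, trace_smul, trace_vmv, smul_eq_mul]
  rw [dot_star_right]
  exact Complex.mul_conj _

lemma dfg_rankOne {f g : ℝ → ℝ} (hg0 : g 0 = 0) {x y : Fin n → ℂ}
    (hx : star x ⬝ᵥ x = 1) (hy : star y ⬝ᵥ y = 1) :
    Dfg f g (vecMulVec x (star x)) (vecMulVec y (star y))
      = g ((f 1) ^ 2 * Complex.normSq (star x ⬝ᵥ y)) := by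
  set P := vecMulVec x (star x) with hPdef
  set Q := vecMulVec y (star y) with hQdef
  have hQpsd : Q.PosSemidef := posSemidef_vmv y
  have hQH : Q.IsHermitian := hQpsd.isHermitian
  have hQ2 : Q * Q = Q := by
    rw [hQdef, vmv_mul_vmv, hy, one_smul]
  have hC : matFun (extZero f) Q = ((f 1 : ℝ) : ℂ) • Q := by
    have := matFun_proj hQH hQ2 (h := extZero f) (by simp [extZero])
    rwa [show extZero f 1 = f 1 by simp [extZero]] at this
  have hQPQ : Q * P * Q = (Complex.normSq (star x ⬝ᵥ y) : ℂ) • Q := by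
    rw [hQdef, hPdef, vmv_mul_vmv, smul_mul_assoc, vmv_mul_vmv, smul_smul]
    congr 1
    rw [show star y ⬝ᵥ x = star (star x ⬝ᵥ y) from star_dotProduct _ _]
    rw [mul_comm]
    exact Complex.mul_conj _
  have hX : matFun (extZero f) Q * P * matFun (extZero f) Q
      = (((f 1) ^ 2 * Complex.normSq (star x ⬝ᵥ y) : ℝ) : ℂ) • Q := by
    rw [hC, smul_mul_assoc, smul_mul_assoc, mul_smul_comm, hQPQ, smul_smul, smul_smul]
    congr 1
    push_cast
    ring
  have hXpsd : (matFun (extZero f) Q * P * matFun (extZero f) Q).PosSemidef := by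
    have hCH : (matFun (extZero f) Q).IsHermitian := matFun_isHermitian hQH _
    have := Matrix.PosSemidef.conjTranspose_mul_mul_same (hPdef ▸ posSemidef_vmv x)
      (matFun (extZero f) Q)
    rwa [hCH.eq] at this
  rw [Dfg]
  rw [hX] at hXpsd ⊢
  apply retr_matFun_scaled hXpsd _ _ hg0
  · rw [smul_mul_assoc, mul_smul_comm, hQ2, smul_smul]
  · rw [trace_smul, smul_eq_mul, trace_vmv, dot_star_right, hy]
    simp

lemma density_n_pos (A : Density n) : 0 < n := by
  rcases Nat.eq_zero_or_pos n with h | h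
  · exfalso
    have htr := A.2.2
    subst h
    rw [Matrix.trace] at htr
    simp at htr
  · exact h

lemma vecMulVec_zero_left (b : Fin n → ℂ) : vecMulVec (0 : Fin n → ℂ) b = 0 := by
  ext i j; simp [vecMulVec_apply]

lemma rankOne_of_witnesses (A : Density n)
    (B : Fin (n-1) → Density n) (horth : ∀ i j, i ≠ j → (B i).1 * (B j).1 = 0)
    (hAB : ∀ i, A.1 * (B i).1 = 0) : IsRankOneProj A.1 := by
  have hn := density_n_pos A
  -- choose a nonzero column of each B i
  have hBne : ∀ i, ∃ k, (fun a => (B i).1 a k) ≠ 0 := by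
    intro i
    by_contra hc
    push_neg at hc
    have : (B i).1 = 0 := by
      ext a k
      have := congrFun (hc k) a
      simpa using this
    have htr := (B i).2.2
    rw [this] at htr
    simp at htr
  choose col hcol using hBne
  set w : Fin (n-1) → (Fin n → ℂ) := fun i => fun a => (B i).1 a (col i) with hw
  have hwne : ∀ i, w i ≠ 0 := fun i => hcol i
  -- dot products of the columns
  have hdot : ∀ i j, star (w i) ⬝ᵥ w j = ((B i).1 * (B j).1) (col i) (col j) := by
    intro i j
    rw [show (B i).1 * (B j).1 = (B i).1ᴴ * (B j).1 by rw [(B i).2.1.isHermitian.eq]]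
    rw [Matrix.mul_apply]
    apply Finset.sum_congr rfl
    intro a _
    simp [hw, conjTranspose_apply, dotProduct, Pi.star_apply]
  have hdot_ne : ∀ i j, i ≠ j → star (w i) ⬝ᵥ w j = 0 := by
    intro i j hij
    rw [hdot i j, horth i j hij]
    rfl
  -- norms
  set σ : Fin (n-1) → ℝ := fun i => ∑ a, Complex.normSq (w i a) with hσ
  have hwdot : ∀ i, star (w i) ⬝ᵥ w i = ((σ i : ℝ) : ℂ) := by
    intro i
    rw [hσ]
    push_cast
    rw [dotProduct]
    apply Finset.sum_congr rfl
    intro a _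
    rw [Pi.star_apply, RCLike.star_def, ← Complex.normSq_eq_conj_mul_self]
  have hσpos : ∀ i, 0 < σ i := by
    intro i
    have : ∃ a, w i a ≠ 0 := by
      by_contra hc
      push_neg at hc
      exact hwne i (funext hc)
    obtain ⟨a, ha⟩ := this
    apply Finset.sum_pos' (fun b _ => Complex.normSq_nonneg _)
    exact ⟨a, Finset.mem_univ a, Complex.normSq_pos.mpr ha⟩
  set v : Fin (n-1) → (Fin n → ℂ) := fun i => (((Real.sqrt (σ i))⁻¹ : ℝ) : ℂ) • w i with hv
  have hvdot : ∀ i j, star (v i) ⬝ᵥ v j = if i = j then 1 else 0 := by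
    intro i j
    rw [hv]
    simp only [star_smul, smul_dotProduct, dotProduct_smul, RCLike.star_def, Complex.conj_ofReal,
      smul_eq_mul]
    rcases eq_or_ne i j with h | h
    · subst h
      rw [if_pos rfl, hwdot i]
      have hs : (Real.sqrt (σ i))⁻¹ * ((Real.sqrt (σ i))⁻¹ * σ i) = 1 := by
        rw [← mul_assoc, ← mul_inv, Real.mul_self_sqrt (le_of_lt (hσpos i)),
          inv_mul_cancel₀ (ne_of_gt (hσpos i))]
      exact_mod_cast hs
    · rw [if_neg h, hdot_ne i j h]
      simp
  have hAv : ∀ i, A.1 *ᵥ v i = 0 := by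
    intro i
    rw [hv]
    have h1 : A.1 *ᵥ w i = 0 := by
      funext a
      rw [mulVec, dotProduct]
      have := congrFun (congrFun (hAB i) a) (col i)
      rw [Matrix.mul_apply] at this
      simpa [hw] using this
    rw [mulVec_smul, h1, smul_zero]
  -- the projection K
  set S : Matrix (Fin n) (Fin n) ℂ := ∑ i, vecMulVec (v i) (star (v i)) with hS
  set K : Matrix (Fin n) (Fin n) ℂ := 1 - S with hK
  have hSH : S.IsHermitian := by
    show Sᴴ = S
    rw [hS, conjTranspose_sum]
    apply Finset.sum_congr rfl
    intro i _
    rw [vmv_conjT, star_star]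
  have hKH : K.IsHermitian := by
    show Kᴴ = K
    rw [hK, conjTranspose_sub, conjTranspose_one, hSH.eq]
  have hSS : S * S = S := by
    rw [hS, Finset.sum_mul_sum]
    apply Finset.sum_congr rfl
    intro i _
    rw [Finset.sum_eq_single i]
    · rw [vmv_mul_vmv, hvdot i i, if_pos rfl, one_smul]
    · intro j _ hji
      rw [vmv_mul_vmv, hvdot i j, if_neg (fun hc => hji (hc.symm)), zero_smul]
    · intro h
      exact absurd (Finset.mem_univ i) h
  have hKK : K * K = K := by
    rw [hK, sub_mul, one_mul, mul_sub, mul_one, hSS]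
    simp
  have hKpsd : K.PosSemidef := by
    have := posSemidef_conjTranspose_mul_self K
    rwa [hKH.eq, hKK] at this
  have htrS : S.trace = ((n - 1 : ℕ) : ℂ) := by
    rw [hS, trace_sum]
    have hone : ∀ i ∈ Finset.univ, (vecMulVec (v i) (star (v i))).trace = 1 := by
      intro i _
      rw [trace_vmv, dot_star_right, hvdot i i, if_pos rfl]
      simp
    rw [Finset.sum_congr rfl hone]
    simp
  have htrK : K.trace = 1 := by
    rw [hK, trace_sub, trace_one, htrS]
    have : ((n - 1 : ℕ) : ℂ) = (n : ℂ) - 1 := by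
      push_cast [Nat.cast_sub hn]
      ring
    rw [this]
    simp [Finset.card_univ]
  have hK1 : IsRankOneProj K := by
    apply isRankOneProj_of hKpsd htrK
    rw [hKK, htrK]
  obtain ⟨z, hz, hKz⟩ := hK1
  -- A = K A K
  have hAS : A.1 * S = 0 := by
    rw [hS, Finset.mul_sum]
    apply Finset.sum_eq_zero
    intro i _
    rw [mul_vmv, hAv i, vecMulVec_zero_left]
  have hAK : A.1 * K = A.1 := by
    rw [hK, mul_sub, mul_one, hAS, sub_zero]
  have hKA : K * A.1 = A.1 := by
    have := congrArg conjTranspose hAK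
    rwa [conjTranspose_mul, hKH.eq, A.2.1.isHermitian.eq] at this
  have hform : A.1 = (star z ⬝ᵥ (A.1 *ᵥ z)) • vecMulVec z (star z) := by
    calc A.1 = K * (A.1 * K) := by rw [hAK, hKA]
      _ = K * vecMulVec (A.1 *ᵥ z) (star z) := by rw [hKz, mul_vmv]
      _ = (star z ⬝ᵥ (A.1 *ᵥ z)) • vecMulVec z (star z) := by rw [hKz, vmv_mul_vmv]
  have hc1 : star z ⬝ᵥ (A.1 *ᵥ z) = 1 := by
    have htr := A.2.2
    rw [hform, trace_smul, trace_vmv, dot_star_right, hz] at htr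
    simpa using htr
  refine ⟨z, hz, ?_⟩
  rw [hform, hc1, one_smul]

set_option maxHeartbeats 1000000 in
lemma exists_witnesses {P : Density n} (hP : IsRankOneProj P.1) :
    ∃ B : Fin (n-1) → Density n,
      (∀ i j, i ≠ j → (B i).1 * (B j).1 = 0) ∧ (∀ i, P.1 * (B i).1 = 0) := by
  obtain ⟨x, hx, hPx⟩ := hP
  have hn := density_n_pos P
  set i₀ : Fin n := ⟨0, hn⟩ with hi₀
  set xE : EuclideanSpace ℂ (Fin n) := (WithLp.equiv 2 (Fin n → ℂ)).symm x with hxE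
  have hone : Orthonormal ℂ (Set.restrict {i₀} (fun _ : Fin n => xE)) := by
    rw [orthonormal_iff_ite]
    rintro ⟨i, hi⟩ ⟨j, hj⟩
    have : i = j := by
      rw [Set.mem_singleton_iff.mp hi, Set.mem_singleton_iff.mp hj]
    subst this
    rw [if_pos rfl]
    show (inner ℂ xE xE : ℂ) = 1
    rw [hxE, EuclideanSpace.inner_eq_star_dotProduct, dotProduct_comm]
    exact hx
  obtain ⟨b, hb⟩ := hone.exists_orthonormalBasis_extension_of_card_eq
    (by simp)
  set u : Fin n → (Fin n → ℂ) := fun j => WithLp.equiv 2 (Fin n → ℂ) (b j) with hu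
  have hudot : ∀ j k, star (u j) ⬝ᵥ u k = if j = k then 1 else 0 := by
    intro j k
    have := orthonormal_iff_ite.mp b.orthonormal j k
    rw [EuclideanSpace.inner_eq_star_dotProduct, dotProduct_comm] at this
    exact this
  have hui₀ : u i₀ = x := by
    simp only [hu]
    rw [hb i₀ (Set.mem_singleton i₀), hxE]
    rfl
  set emb : Fin (n-1) → Fin n := fun i => ⟨i.1 + 1, by omega⟩ with hemb
  have hembne : ∀ i j : Fin (n-1), i ≠ j → emb i ≠ emb j := by
    intro i j hij hc
    apply hij
    rw [hemb] at hc
    simp only [Fin.mk.injEq, add_left_inj] at hc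
    exact Fin.ext hc
  have hembi₀ : ∀ i, emb i ≠ i₀ := by
    intro i hc
    rw [hemb, hi₀] at hc
    simp at hc
  refine ⟨fun i => ⟨vecMulVec (u (emb i)) (star (u (emb i))), posSemidef_vmv _, ?_⟩, ?_, ?_⟩
  · rw [trace_vmv, dot_star_right, hudot, if_pos rfl]
    simp
  · intro i j hij
    show vecMulVec (u (emb i)) (star (u (emb i))) * vecMulVec (u (emb j)) (star (u (emb j))) = 0
    rw [vmv_mul_vmv, hudot, if_neg (hembne i j hij), zero_smul]
  · intro i
    show P.1 * vecMulVec (u (emb i)) (star (u (emb i))) = 0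
    rw [hPx, ← hui₀, vmv_mul_vmv, hudot, if_neg (Ne.symm (hembi₀ i)), zero_smul]

end Aux

/-- A map on densities preserving `D'_{f,g}`
(case `lim_{ε→0⁺} f(ε) = 0`, `g` injective) maps rank-one projections
to rank-one projections and preserves the transition probability. -/
theorem stmt16 {n : ℕ}
    (f : ℝ → ℝ) (hf_pos : ∀ x ∈ Set.Ioi (0:ℝ), 0 < f x)
    (hf_cont : ContinuousOn f (Set.Ioi 0))
    (hf_lim : Filter.Tendsto f (nhdsWithin 0 (Set.Ioi 0)) (nhds 0))
    (g : ℝ → ℝ) (hg_nonneg : ∀ x ∈ Set.Ici (0:ℝ), 0 ≤ g x)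
    (hg_cont : ContinuousOn g (Set.Ici 0))
    (hg_inj : Set.InjOn g (Set.Ici 0)) (hg0 : g 0 = 0)
    (φ : Density n → Density n)
    (hφ : ∀ A B : Density n, Dfg f g (φ A).1 (φ B).1 = Dfg f g A.1 B.1) :
    (∀ P : Density n, IsRankOneProj P.1 → IsRankOneProj (φ P).1) ∧
    (∀ P Q : Density n, IsRankOneProj P.1 → IsRankOneProj Q.1 →
      ((φ P).1 * (φ Q).1).trace = (P.1 * Q.1).trace) := by
  have hf1 : 0 < f 1 := hf_pos 1 (by norm_num)
  have horth : ∀ A B : Density n, (φ A).1 * (φ B).1 = 0 ↔ A.1 * B.1 = 0 := by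
    intro A B
    rw [← dfg_eq_zero_iff hf_pos hg_nonneg hg_inj hg0 (φ A) (φ B),
        ← dfg_eq_zero_iff hf_pos hg_nonneg hg_inj hg0 A B, hφ A B]
  have part1 : ∀ P : Density n, IsRankOneProj P.1 → IsRankOneProj (φ P).1 := by
    intro P hP
    obtain ⟨B, hBo, hPB⟩ := exists_witnesses hP
    exact rankOne_of_witnesses (φ P) (fun i => φ (B i))
      (fun i j hij => (horth (B i) (B j)).mpr (hBo i j hij))
      (fun i => (horth P (B i)).mpr (hPB i))
  refine ⟨part1, ?_⟩
  intro P Q hP hQ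
  obtain ⟨x', hx', hPx'⟩ := part1 P hP
  obtain ⟨y', hy', hQy'⟩ := part1 Q hQ
  obtain ⟨x, hx, hPx⟩ := hP
  obtain ⟨y, hy, hQy⟩ := hQ
  have e1 : Dfg f g (φ P).1 (φ Q).1 = g ((f 1) ^ 2 * Complex.normSq (star x' ⬝ᵥ y')) := by
    rw [hPx', hQy']
    exact dfg_rankOne hg0 hx' hy'
  have e2 : Dfg f g P.1 Q.1 = g ((f 1) ^ 2 * Complex.normSq (star x ⬝ᵥ y)) := by
    rw [hPx, hQy]
    exact dfg_rankOne hg0 hx hy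
  have heq := hφ P Q
  rw [e1, e2] at heq
  have harg : (f 1) ^ 2 * Complex.normSq (star x' ⬝ᵥ y')
      = (f 1) ^ 2 * Complex.normSq (star x ⬝ᵥ y) :=
    hg_inj (mul_nonneg (sq_nonneg _) (Complex.normSq_nonneg _))
      (mul_nonneg (sq_nonneg _) (Complex.normSq_nonneg _)) heq
  have hns : Complex.normSq (star x' ⬝ᵥ y') = Complex.normSq (star x ⬝ᵥ y) :=
    mul_left_cancel₀ (pow_ne_zero 2 (ne_of_gt hf1)) harg
  rw [hPx', hQy', hPx, hQy, trace_rankOne_pair, trace_rankOne_pair, hns]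
end

section
/- Let H be a finite-dimensional complex Hilbert space. Let f:(0,∞)→(0,∞) be strictly monotone decreasing and strictly convex with lim_{ε→0⁺} f(ε)=+∞, and let g:[0,∞)→[0,∞) be strictly monotone increasing, continuous, with g(0)=0 and lim_{t→∞} g(t)=∞, and either strictly convex or strictly concave. Suppose φ: S(H) → S(H) satisfies D'_{f,g}(φ(A)‖φ(B)) = D'_{f,g}(A‖B) for all A, B ∈ S(H). Then for all A, B ∈ S(H): supp A ⊆ supp B if and only if supp φ(A) ⊆ supp φ(B); consequently, rank φ(A) = rank A for every A ∈ S(H). -/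
open Matrix
open scoped ComplexOrder

section Aux

open Module Submodule

/-- The support of a matrix, as the range of the associated linear map. -/
noncomputable def suppOf {n : ℕ} (A : Matrix (Fin n) (Fin n) ℂ) :
    Submodule ℂ (Fin n → ℂ) := LinearMap.range (Matrix.toLin' A)

lemma rank_eq_finrank_suppOf {n : ℕ} (A : Matrix (Fin n) (Fin n) ℂ) :
    A.rank = finrank ℂ (suppOf A) := by
  have h : LinearMap.range A.mulVecLin = suppOf A := by
    ext x
    constructor
    · rintro ⟨y, rfl⟩; exact ⟨y, by rw [Matrix.toLin'_apply, Matrix.mulVecLin_apply]⟩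
    · rintro ⟨y, rfl⟩; exact ⟨y, by rw [Matrix.toLin'_apply, Matrix.mulVecLin_apply]⟩
  rw [Matrix.rank, h]

lemma suppLE_iff_suppOf_le {n : ℕ} (A B : Matrix (Fin n) (Fin n) ℂ) :
    suppLE A B ↔ suppOf A ≤ suppOf B := Iff.rfl

lemma inner_eq_dot {n : ℕ} (x y : EuclideanSpace ℂ (Fin n)) :
    (inner ℂ x y : ℂ) =
      dotProduct (star (WithLp.linearEquiv 2 ℂ (Fin n → ℂ) x))
        (WithLp.linearEquiv 2 ℂ (Fin n → ℂ) y) := by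
  simp [PiLp.inner_apply, dotProduct, RCLike.inner_apply, WithLp.linearEquiv_apply,
    Pi.star_apply, mul_comm]

lemma posSemidef_vecMulVec {n : ℕ} (x : Fin n → ℂ) :
    (Matrix.vecMulVec x (star x)).PosSemidef := by
  rw [Matrix.vecMulVec_eq Unit, ← Matrix.conjTranspose_replicateCol]
  exact Matrix.posSemidef_self_mul_conjTranspose _

lemma posSemidef_real_smul {n : ℕ} {M : Matrix (Fin n) (Fin n) ℂ} (hM : M.PosSemidef)
    {c : ℝ} (hc : 0 ≤ c) : (((c : ℂ)) • M).PosSemidef := by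
  refine ⟨?_, fun x => ?_⟩
  · have : star (c : ℂ) = (c : ℂ) := by simp [Complex.star_def, Complex.conj_ofReal]
    unfold Matrix.IsHermitian
    rw [Matrix.conjTranspose_smul, hM.1.eq, this]
  · simpa [Finsupp.mul_sum, mul_assoc, mul_left_comm] using
      mul_nonneg (Complex.zero_le_real.2 hc) (hM.2 x)

lemma trace_vecMulVec' {n : ℕ} (x : Fin n → ℂ) :
    (Matrix.vecMulVec x (star x)).trace = dotProduct (star x) x := by
  simp [Matrix.trace, Matrix.diag, Matrix.vecMulVec_apply, dotProduct, mul_comm]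

lemma vecMulVec_mulVec' {n : ℕ} (w u x : Fin n → ℂ) :
    (Matrix.vecMulVec w u).mulVec x = (dotProduct u x) • w := by
  ext i
  simp [Matrix.mulVec, Matrix.vecMulVec_apply, dotProduct, Finset.sum_mul,
    Finset.mul_sum, mul_assoc, mul_comm, mul_left_comm]

set_option maxHeartbeats 1000000 in
/-- For every nonzero subspace there is a density matrix supported exactly there. -/
lemma exists_density_support {n : ℕ} (W : Submodule ℂ (Fin n → ℂ)) (hW : W ≠ ⊥) :
    ∃ D : Density n, suppOf D.1 = W := by
  classical
  let eL : EuclideanSpace ℂ (Fin n) ≃ₗ[ℂ] (Fin n → ℂ) := WithLp.linearEquiv 2 ℂ (Fin n → ℂ)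
  let W' : Submodule ℂ (EuclideanSpace ℂ (Fin n)) :=
    W.map (eL.symm : (Fin n → ℂ) →ₗ[ℂ] EuclideanSpace ℂ (Fin n))
  have hW'W : ∀ z : EuclideanSpace ℂ (Fin n), z ∈ W' ↔ eL z ∈ W := by
    intro z
    constructor
    · rintro ⟨w, hw, rfl⟩; simpa using hw
    · intro hz; exact ⟨eL z, hz, by simp⟩
  set d := finrank ℂ W' with hd_def
  have hd : 0 < d := by
    rcases Nat.eq_zero_or_pos d with h0 | h
    · exfalso
      apply hW
      rw [Submodule.eq_bot_iff]
      intro x hx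
      have hx' : eL.symm x ∈ W' := ⟨x, hx, rfl⟩
      rw [Submodule.finrank_eq_zero.1 h0, Submodule.mem_bot] at hx'
      have h2 := congrArg eL hx'
      simpa using h2
    · exact h
  let b := stdOrthonormalBasis ℂ W'
  let v : Fin d → (Fin n → ℂ) := fun i => eL ((b i : W') : EuclideanSpace ℂ (Fin n))
  have hvW : ∀ i, v i ∈ W := fun i => (hW'W _).1 (b i).2
  have hvv : ∀ i j, dotProduct (star (v i)) (v j) = if i = j then 1 else 0 := by
    intro i j
    have h := orthonormal_iff_ite.mp b.orthonormal i j
    rw [Submodule.coe_inner, inner_eq_dot] at h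
    exact h
  have hexp : ∀ y ∈ W, ∑ i, (dotProduct (star (v i)) y) • v i = y := by
    intro y hy
    have hy' : eL.symm y ∈ W' := ⟨y, hy, rfl⟩
    have h := b.sum_repr' (⟨eL.symm y, hy'⟩ : W')
    have h2 := congrArg (eL.toLinearMap.comp W'.subtype) h
    rw [map_sum] at h2
    simp only [LinearMap.coe_comp, Function.comp_apply, Submodule.coe_subtype,
      LinearEquiv.coe_coe, LinearEquiv.apply_symm_apply] at h2
    conv_rhs => rw [← h2]
    refine Finset.sum_congr rfl fun i _ => ?_
    rw [Submodule.coe_smul, _root_.map_smul, Submodule.coe_inner, inner_eq_dot,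
      LinearEquiv.apply_symm_apply]
  let M : Matrix (Fin n) (Fin n) ℂ := ∑ i, Matrix.vecMulVec (v i) (star (v i))
  let c : ℝ := (d : ℝ)⁻¹
  have hc : 0 ≤ c := by positivity
  let D : Matrix (Fin n) (Fin n) ℂ := (c : ℂ) • M
  have hMpsd : M.PosSemidef :=
    Finset.sum_induction _ _ (fun a b ha hb => ha.add hb) Matrix.PosSemidef.zero
      (fun i _ => posSemidef_vecMulVec (v i))
  have hDpsd : D.PosSemidef := posSemidef_real_smul hMpsd hc
  have htr : D.trace = 1 := by
    have hM : M.trace = (d : ℂ) := by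
      rw [Matrix.trace_sum]
      have : ∀ i : Fin d, (Matrix.vecMulVec (v i) (star (v i))).trace = 1 := by
        intro i
        rw [trace_vecMulVec', hvv i i, if_pos rfl]
      rw [Finset.sum_congr rfl fun i _ => this i]
      simp
    rw [Matrix.trace_smul, hM]
    have hdne : (d : ℂ) ≠ 0 := by exact_mod_cast hd.ne'
    simp [c, smul_eq_mul]
    push_cast
    field_simp
  have hDapp : ∀ x : Fin n → ℂ,
      Matrix.toLin' D x = (c : ℂ) • ∑ i, (dotProduct (star (v i)) x) • v i := by
    intro x
    rw [Matrix.toLin'_apply]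
    show ((c : ℂ) • M).mulVec x = _
    rw [Matrix.smul_mulVec]
    congr 1
    have : M.mulVec x = ∑ i, (Matrix.vecMulVec (v i) (star (v i))).mulVec x := by
      ext j
      simp [M, Matrix.mulVec, dotProduct, Matrix.sum_apply, Finset.sum_mul]
      rw [Finset.sum_comm]
    rw [this]
    exact Finset.sum_congr rfl fun i _ => vecMulVec_mulVec' _ _ _
  refine ⟨⟨D, hDpsd, htr⟩, le_antisymm ?_ ?_⟩
  · rintro y ⟨x, rfl⟩
    show Matrix.toLin' D x ∈ W
    rw [hDapp]
    exact W.smul_mem _ (Submodule.sum_mem _ fun i _ => W.smul_mem _ (hvW i))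
  · intro y hy
    refine ⟨(d : ℂ) • y, ?_⟩
    show Matrix.toLin' D ((d : ℂ) • y) = y
    rw [_root_.map_smul, hDapp, hexp y hy]
    rw [smul_smul]
    have hdne : (d : ℂ) ≠ 0 := by exact_mod_cast hd.ne'
    have h3 : (d : ℂ) * (c : ℂ) = 1 := by
      simp only [c]
      push_cast
      exact mul_inv_cancel₀ hdne
    rw [h3, one_smul]

/-- Inside a subspace, there are subspaces of any smaller dimension. -/
lemma exists_le_finrank_eq {n : ℕ} (W : Submodule ℂ (Fin n → ℂ)) (k : ℕ)
    (hk : k ≤ finrank ℂ W) :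
    ∃ W' : Submodule ℂ (Fin n → ℂ), W' ≤ W ∧ finrank ℂ W' = k := by
  classical
  let b := Module.finBasis ℂ W
  let g : Fin k → Fin (finrank ℂ W) := fun i => ⟨i.1, lt_of_lt_of_le i.2 hk⟩
  have hginj : Function.Injective g := by
    intro i j hij
    have h2 := congrArg Fin.val hij
    exact Fin.ext h2
  have hli : LinearIndependent ℂ ((W.subtype ∘ b) ∘ g) :=
    (b.linearIndependent.map' W.subtype (Submodule.ker_subtype W)).comp g hginj
  refine ⟨Submodule.span ℂ (Set.range ((W.subtype ∘ b) ∘ g)), ?_, ?_⟩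
  · rw [Submodule.span_le]
    rintro x ⟨i, rfl⟩
    exact (b (g i)).2
  · rw [finrank_span_eq_card hli, Fintype.card_fin]

end Aux

/-- A map on densities preserving `D'_{f,g}`
(case `lim_{ε→0⁺} f(ε) = ∞`) preserves support inclusion in both directions,
and consequently preserves the rank. -/
theorem stmt17 {n : ℕ}
    (f : ℝ → ℝ) (hf_pos : ∀ x ∈ Set.Ioi (0:ℝ), 0 < f x)
    (hf_anti : StrictAntiOn f (Set.Ioi 0))
    (hf_conv : StrictConvexOn ℝ (Set.Ioi 0) f)
    (hf_lim : Filter.Tendsto f (nhdsWithin 0 (Set.Ioi 0)) Filter.atTop)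
    (g : ℝ → ℝ) (hg_nonneg : ∀ x ∈ Set.Ici (0:ℝ), 0 ≤ g x)
    (hg_mono : StrictMonoOn g (Set.Ici 0))
    (hg_cont : ContinuousOn g (Set.Ici 0)) (hg0 : g 0 = 0)
    (hg_top : Filter.Tendsto g Filter.atTop Filter.atTop)
    (hg_cc : StrictConvexOn ℝ (Set.Ici 0) g ∨ StrictConcaveOn ℝ (Set.Ici 0) g)
    (φ : Density n → Density n)
    (hφ : ∀ A B : Density n, DfgE f g (φ A).1 (φ B).1 = DfgE f g A.1 B.1) :
    (∀ A B : Density n, (suppLE A.1 B.1 ↔ suppLE (φ A).1 (φ B).1)) ∧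
    (∀ A : Density n, (φ A).1.rank = A.1.rank) := by
  classical
  have key : ∀ A B : Density n, suppLE A.1 B.1 ↔ suppLE (φ A).1 (φ B).1 := by
    intro A B
    have h := hφ A B
    unfold DfgE at h
    constructor
    · intro h1
      by_contra h2
      rw [if_neg h2, if_pos h1] at h
      exact EReal.coe_ne_top _ h.symm
    · intro h2
      by_contra h1
      rw [if_pos h2, if_neg h1] at h
      exact EReal.coe_ne_top _ h
  refine ⟨key, ?_⟩
  -- supports are nonzero
  have hne : ∀ A : Density n, suppOf A.1 ≠ ⊥ := by
    intro A hbot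
    have h0 : Matrix.toLin' A.1 = 0 := LinearMap.range_eq_bot.1 hbot
    have hA0 : A.1 = 0 := by
      have := Matrix.toLin'.injective (by rw [h0, map_zero] : Matrix.toLin' A.1 = Matrix.toLin' 0)
      exact this
    have := A.2.2
    rw [hA0, Matrix.trace_zero] at this
    exact one_ne_zero this.symm
  have key' : ∀ A B : Density n, suppOf A.1 ≤ suppOf B.1 ↔ suppOf (φ A).1 ≤ suppOf (φ B).1 :=
    fun A B => key A B
  have hfinpos : ∀ A : Density n, 0 < Module.finrank ℂ (suppOf A.1) := by
    intro A
    rcases Nat.eq_zero_or_pos (Module.finrank ℂ (suppOf A.1)) with h0 | h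
    · exact absurd (Submodule.finrank_eq_zero.1 h0) (hne A)
    · exact h
  -- strictness transfer
  have hstrict : ∀ A B : Density n, suppOf A.1 < suppOf B.1 → suppOf (φ A).1 < suppOf (φ B).1 := by
    intro A B hAB
    refine lt_of_le_of_ne ((key' A B).1 hAB.le) ?_
    intro he
    exact absurd ((key' B A).2 he.ge) hAB.not_ge
  -- Claim A : lower bound on the rank of the image
  have claimA : ∀ k : ℕ, ∀ A : Density n, k ≤ Module.finrank ℂ (suppOf A.1) →
      k ≤ Module.finrank ℂ (suppOf (φ A).1) := by
    intro k
    induction k with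
    | zero => intro A _; exact Nat.zero_le _
    | succ k ih =>
      intro A hA
      rcases Nat.eq_zero_or_pos k with rfl | hk
      · exact hfinpos (φ A)
      · obtain ⟨W', hW'le, hW'rank⟩ :=
          exists_le_finrank_eq (suppOf A.1) k (le_trans (Nat.le_succ k) hA)
        have hW'ne : W' ≠ ⊥ := by
          intro hb
          rw [hb, finrank_bot] at hW'rank
          omega
        obtain ⟨A', hA'⟩ := exists_density_support W' hW'ne
        have hlt : suppOf A'.1 < suppOf A.1 := by
          rw [hA']
          refine lt_of_le_of_ne hW'le ?_
          intro he
          rw [he] at hW'rank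
          omega
        have h1 : k ≤ Module.finrank ℂ (suppOf (φ A').1) := ih A' (by rw [hA', hW'rank])
        have h2 := Submodule.finrank_lt_finrank_of_lt (hstrict A' A hlt)
        omega
  -- Claim B : upper bound on the rank of the image
  have hfinle : ∀ (W : Submodule ℂ (Fin n → ℂ)), Module.finrank ℂ W ≤ n := by
    intro W
    have h := Submodule.finrank_le W
    rwa [Module.finrank_pi, Fintype.card_fin] at h
  have claimB : ∀ j : ℕ, ∀ A : Density n, n - Module.finrank ℂ (suppOf A.1) ≤ j →
      Module.finrank ℂ (suppOf (φ A).1) ≤ Module.finrank ℂ (suppOf A.1) := by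
    intro j
    induction j with
    | zero =>
      intro A hA
      have h1 := hfinle (suppOf A.1)
      have h2 := hfinle (suppOf (φ A).1)
      omega
    | succ j ih =>
      intro A hA
      rcases Nat.lt_or_ge (Module.finrank ℂ (suppOf A.1)) n with hlt | hge
      · -- pick x outside the support
        have hnetop : suppOf A.1 ≠ ⊤ := by
          intro he
          rw [he, finrank_top, Module.finrank_pi, Fintype.card_fin] at hlt
          omega
        obtain ⟨x, hx⟩ : ∃ x, x ∉ suppOf A.1 := by
          by_contra hc
          push_neg at hc
          exact hnetop (Submodule.eq_top_iff'.2 hc)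
        have hx0 : x ≠ 0 := fun h0 => hx (h0 ▸ (suppOf A.1).zero_mem)
        set W'' : Submodule ℂ (Fin n → ℂ) := suppOf A.1 ⊔ Submodule.span ℂ {x} with hW''
        have hsub : suppOf A.1 < W'' := by
          refine lt_of_le_of_ne le_sup_left ?_
          intro he
          exact hx (he ▸ (le_sup_right (α := Submodule ℂ (Fin n → ℂ)))
            (Submodule.mem_span_singleton_self x))
        have hrankW'' : Module.finrank ℂ W'' ≤ Module.finrank ℂ (suppOf A.1) + 1 := by
          have h := Submodule.finrank_sup_add_finrank_inf_eq (suppOf A.1) (Submodule.span ℂ {x})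
          have hs : Module.finrank ℂ (Submodule.span ℂ ({x} : Set (Fin n → ℂ))) = 1 :=
            finrank_span_singleton hx0
          rw [← hW''] at h
          omega
        have hrankW''2 : Module.finrank ℂ (suppOf A.1) < Module.finrank ℂ W'' :=
          Submodule.finrank_lt_finrank_of_lt hsub
        obtain ⟨A'', hA''⟩ := exists_density_support W''
          (fun hb => hne A (le_bot_iff.1 (hb ▸ hsub.le)))
        have hlt2 : suppOf A.1 < suppOf A''.1 := by rw [hA'']; exact hsub
        have h1 : Module.finrank ℂ (suppOf (φ A).1) < Module.finrank ℂ (suppOf (φ A'').1) :=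
          Submodule.finrank_lt_finrank_of_lt (hstrict A A'' hlt2)
        have h2 : Module.finrank ℂ (suppOf (φ A'').1) ≤ Module.finrank ℂ (suppOf A''.1) := by
          refine ih A'' ?_
          rw [hA'']
          omega
        rw [hA''] at h2
        omega
      · have h1 := hfinle (suppOf (φ A).1)
        omega
  intro A
  rw [rank_eq_finrank_suppOf, rank_eq_finrank_suppOf]
  exact le_antisymm (claimB n A (Nat.sub_le _ _)) (claimA (Module.finrank ℂ (suppOf A.1)) A le_rfl)
end
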